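/- arXiv:2207.03275 — 5 statements merged into one kernel-verified Lean document; each statement's English description precedes it below -/
import Mathlib

section
/- If σ and σ' are two finite sequences of full doubling operations (each operation being an east full doubling D_E or a north full doubling D_N) that contain the same number of east operations and the same number of north operations, then applying σ and applying σ' to the same shape S yield the same final shape; i.e., the result of a sequence of full doubling operations depends only on the number of horizontal and vertical operations and not on their order. -/
/-- Minimum first coordinate of a shape (0 for the empty set). -/
def xmin (S : Finset (ℤ × ℤ)) : ℤ := WithTop.untopD 0 ((S.image Prod.fst).min)

/-- Minimum second coordinate of a shape (0 for the empty set). -/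
def ymin (S : Finset (ℤ × ℤ)) : ℤ := WithTop.untopD 0 ((S.image Prod.snd).min)

/-- East full doubling. -/
def DE (S : Finset (ℤ × ℤ)) : Finset (ℤ × ℤ) :=
  S.image (fun p => (2 * p.1 - xmin S, p.2)) ∪
    S.image (fun p => (2 * p.1 - xmin S + 1, p.2))

/-- North full doubling. -/
def DN (S : Finset (ℤ × ℤ)) : Finset (ℤ × ℤ) :=
  S.image (fun p => (p.1, 2 * p.2 - ymin S)) ∪
    S.image (fun p => (p.1, 2 * p.2 - ymin S + 1))

/-- Apply a sequence of full doubling operations (`true` = east, `false` = north),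
in order (head of the list first). -/
def applySeq (σ : List Bool) (S : Finset (ℤ × ℤ)) : Finset (ℤ × ℤ) :=
  σ.foldl (fun T b => if b then DE T else DN T) S

/-- The (p,q)-rectangle around an integer point. -/
noncomputable def Rec2 (u : ℤ × ℤ) (p q : ℕ) : Finset (ℤ × ℤ) :=
  Finset.Icc u.1 (u.1 + (p : ℤ) - 1) ×ˢ Finset.Icc u.2 (u.2 + (q : ℤ) - 1)

/-- The reconfiguration function `F_{l,k}`. -/
noncomputable def F (l k : ℕ) (S : Finset (ℤ × ℤ)) : Finset (ℤ × ℤ) :=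
  S.biUnion fun p =>
    Rec2 (p.1 + ((2 : ℤ) ^ l - 1) * (p.1 - xmin S),
          p.2 + ((2 : ℤ) ^ k - 1) * (p.2 - ymin S)) (2 ^ l) (2 ^ k)

/-- Two grid points are adjacent if they are at orthogonal distance 1. -/
def Adj (u v : ℤ × ℤ) : Prop := (u.1 - v.1).natAbs + (u.2 - v.2).natAbs = 1

/-- A shape is connected if any two of its points are joined by a path of
adjacent points inside the shape. -/
def ShapeConnected (S : Finset (ℤ × ℤ)) : Prop :=
  ∀ u ∈ S, ∀ v ∈ S,
    Relation.ReflTransGen (fun a b => a ∈ S ∧ b ∈ S ∧ Adj a b) u v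

/-- `wD D x` is the number of elements of `D` strictly west of `x`. -/
def wD (D : Finset ℤ) (x : ℤ) : ℕ := (D.filter (· < x)).card

/-- East RC doubling of `S` with doubled column set `D`. -/
def RCE (S : Finset (ℤ × ℤ)) (D : Finset ℤ) : Finset (ℤ × ℤ) :=
  S.image (fun p => (p.1 + (wD D p.1 : ℤ), p.2)) ∪
    (S.filter fun p => p.1 ∈ D).image fun p => (p.1 + (wD D p.1 : ℤ) + 1, p.2)

/-- North RC doubling of `S` with doubled row set `D`. -/
def RCN (S : Finset (ℤ × ℤ)) (D : Finset ℤ) : Finset (ℤ × ℤ) :=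
  S.image (fun p => (p.1, p.2 + (wD D p.2 : ℤ))) ∪
    (S.filter fun p => p.2 ∈ D).image fun p => (p.1, p.2 + (wD D p.2 : ℤ) + 1)

/-- `D` is an admissible doubled column set for `S`. -/
def eastAdmissible (S : Finset (ℤ × ℤ)) (D : Finset ℤ) : Prop :=
  D.Nonempty ∧ ∀ d ∈ D, ∃ y, (d, y) ∈ S

/-- `D` is an admissible doubled row set for `S`. -/
def northAdmissible (S : Finset (ℤ × ℤ)) (D : Finset ℤ) : Prop :=
  D.Nonempty ∧ ∀ d ∈ D, ∃ x, (x, d) ∈ S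

/-- One east or north RC doubling step. -/
def RCStep (S T : Finset (ℤ × ℤ)) : Prop :=
  ∃ D : Finset ℤ,
    (eastAdmissible S D ∧ T = RCE S D) ∨ (northAdmissible S D ∧ T = RCN S D)

/-- One single column or single row doubling step (an RC step with `|D| = 1`). -/
def SingleStep (S T : Finset (ℤ × ℤ)) : Prop :=
  ∃ D : Finset ℤ, D.card = 1 ∧
    ((eastAdmissible S D ∧ T = RCE S D) ∨ (northAdmissible S D ∧ T = RCN S D))

/-- Translate a shape by a vector. -/
def translateSh (v : ℤ × ℤ) (S : Finset (ℤ × ℤ)) : Finset (ℤ × ℤ) :=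
  S.image fun p => (p.1 + v.1, p.2 + v.2)

/-- Single east column doubling at column `d`. -/
def oE (d : ℤ) (T : Finset (ℤ × ℤ)) : Finset (ℤ × ℤ) :=
  (T.filter fun p => p.1 ≤ d) ∪ (T.filter fun p => d ≤ p.1).image fun p => (p.1 + 1, p.2)

/-- The column of `S` at `x`. -/
def colS (S : Finset (ℤ × ℤ)) (x : ℤ) : Finset ℤ := (S.filter fun p => p.1 = x).image Prod.snd

/-- The row of `S` at `y`. -/
def rowS (S : Finset (ℤ × ℤ)) (y : ℤ) : Finset ℤ := (S.filter fun p => p.2 = y).image Prod.fst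

/-- `phiC S x` counts the column changes of `S` in the interval `(xmin S, x]`. -/
noncomputable def phiC (S : Finset (ℤ × ℤ)) (x : ℤ) : ℕ :=
  ((Finset.Icc (xmin S + 1) x).filter fun x' => colS S x' ≠ colS S (x' - 1)).card

/-- `phiR S y` counts the row changes of `S` in the interval `(ymin S, y]`. -/
noncomputable def phiR (S : Finset (ℤ × ℤ)) (y : ℤ) : ℕ :=
  ((Finset.Icc (ymin S + 1) y).filter fun y' => rowS S y' ≠ rowS S (y' - 1)).card

/-- Column compression of a shape. -/
noncomputable def KC (S : Finset (ℤ × ℤ)) : Finset (ℤ × ℤ) := S.image fun p => ((phiC S p.1 : ℤ), p.2)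

/-- Row compression of a shape. -/
noncomputable def KR (S : Finset (ℤ × ℤ)) : Finset (ℤ × ℤ) := S.image fun p => (p.1, (phiR S p.2 : ℤ))

/-- The baseline shape of `S`. -/
noncomputable def Baseline (S : Finset (ℤ × ℤ)) : Finset (ℤ × ℤ) := KR (KC S)

/-- Number of distinct consecutive columns of `S`. -/
noncomputable def mC (S : Finset (ℤ × ℤ)) : ℕ := (S.image Prod.fst).sup (phiC S) + 1

/-- Number of distinct consecutive rows of `S`. -/
noncomputable def mR (S : Finset (ℤ × ℤ)) : ℕ := (S.image Prod.snd).sup (phiR S) + 1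

/-- Consecutive multiplicity of the `i`-th distinct column of `S`. -/
noncomputable def MC (S : Finset (ℤ × ℤ)) (i : ℕ) : ℕ := ((S.image Prod.fst).filter fun x => phiC S x = i).card

/-- Consecutive multiplicity of the `i`-th distinct row of `S`. -/
noncomputable def MR (S : Finset (ℤ × ℤ)) (i : ℕ) : ℕ := ((S.image Prod.snd).filter fun y => phiR S y = i).card

/-- The four unit directions. -/
def dirs : Finset (ℤ × ℤ) := {(1, 0), (-1, 0), (0, 1), (0, -1)}

/-- One node-addition growth step: a direction `d` is fixed and every new node is
generated at a position `p + d` for an existing node `p`. -/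
def AddStep (S T : Finset (ℤ × ℤ)) : Prop :=
  ∃ d ∈ dirs, S ⊆ T ∧ T ⊆ S ∪ S.image (fun p => (p.1 + d.1, p.2 + d.2))


lemma xmin_DN (S : Finset (ℤ × ℤ)) : xmin (DN S) = xmin S := by
  unfold xmin DN
  rw [Finset.image_union, Finset.image_image, Finset.image_image,
    show (Prod.fst ∘ fun p : ℤ × ℤ => (p.1, 2 * p.2 - ymin S)) = Prod.fst from rfl,
    show (Prod.fst ∘ fun p : ℤ × ℤ => (p.1, 2 * p.2 - ymin S + 1)) = Prod.fst from rfl,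
    Finset.union_self]

lemma ymin_DE (S : Finset (ℤ × ℤ)) : ymin (DE S) = ymin S := by
  unfold ymin DE
  rw [Finset.image_union, Finset.image_image, Finset.image_image,
    show (Prod.snd ∘ fun p : ℤ × ℤ => (2 * p.1 - xmin S, p.2)) = Prod.snd from rfl,
    show (Prod.snd ∘ fun p : ℤ × ℤ => (2 * p.1 - xmin S + 1, p.2)) = Prod.snd from rfl,
    Finset.union_self]

lemma DE_DN_comm (S : Finset (ℤ × ℤ)) : DE (DN S) = DN (DE S) := by
  have h1 : xmin (Finset.image (fun p : ℤ × ℤ => (p.1, 2 * p.2 - ymin S)) S ∪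
      Finset.image (fun p : ℤ × ℤ => (p.1, 2 * p.2 - ymin S + 1)) S) = xmin S := xmin_DN S
  have h2 : ymin (Finset.image (fun p : ℤ × ℤ => (2 * p.1 - xmin S, p.2)) S ∪
      Finset.image (fun p : ℤ × ℤ => (2 * p.1 - xmin S + 1, p.2)) S) = ymin S := ymin_DE S
  ext ⟨x, y⟩
  simp only [DE, DN, h1, h2, Finset.mem_union, Finset.mem_image, Prod.exists,
    Prod.mk.injEq]
  constructor
  · rintro (⟨a, b, (⟨c, d, hm, rfl, rfl⟩ | ⟨c, d, hm, rfl, rfl⟩), rfl, rfl⟩ |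
      ⟨a, b, (⟨c, d, hm, rfl, rfl⟩ | ⟨c, d, hm, rfl, rfl⟩), rfl, rfl⟩)
    · exact Or.inl ⟨_, _, Or.inl ⟨c, d, hm, rfl, rfl⟩, rfl, rfl⟩
    · exact Or.inr ⟨_, _, Or.inl ⟨c, d, hm, rfl, rfl⟩, rfl, rfl⟩
    · exact Or.inl ⟨_, _, Or.inr ⟨c, d, hm, rfl, rfl⟩, rfl, rfl⟩
    · exact Or.inr ⟨_, _, Or.inr ⟨c, d, hm, rfl, rfl⟩, rfl, rfl⟩
  · rintro (⟨a, b, (⟨c, d, hm, rfl, rfl⟩ | ⟨c, d, hm, rfl, rfl⟩), rfl, rfl⟩ |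
      ⟨a, b, (⟨c, d, hm, rfl, rfl⟩ | ⟨c, d, hm, rfl, rfl⟩), rfl, rfl⟩)
    · exact Or.inl ⟨_, _, Or.inl ⟨c, d, hm, rfl, rfl⟩, rfl, rfl⟩
    · exact Or.inr ⟨_, _, Or.inl ⟨c, d, hm, rfl, rfl⟩, rfl, rfl⟩
    · exact Or.inl ⟨_, _, Or.inr ⟨c, d, hm, rfl, rfl⟩, rfl, rfl⟩
    · exact Or.inr ⟨_, _, Or.inr ⟨c, d, hm, rfl, rfl⟩, rfl, rfl⟩

/-- the result of a sequence of full doubling operations depends only on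
the number of east and north operations, not on their order. -/
theorem full_doubling_order_independent (S : Finset (ℤ × ℤ)) (hS : S.Nonempty)
    (σ σ' : List Bool)
    (ht : σ.count true = σ'.count true) (hf : σ.count false = σ'.count false) :
    applySeq σ S = applySeq σ' S := by
  have hperm : σ.Perm σ' := by
    rw [List.perm_iff_count]
    intro a
    cases a
    · exact hf
    · exact ht
  exact hperm.foldl_eq' (fun x _ y _ z => by
    cases x <;> cases y <;> simp [DE_DN_comm]) S
end

section
/- For every shape S and all natural numbers l, k, the rectangles Rec((x + (2^l − 1)(x − xmin(S)), y + (2^k − 1)(y − ymin(S))), 2^l, 2^k) associated with distinct points (x,y) ∈ S are pairwise disjoint; consequently |F_{l,k}(S)| = 2^{l+k} · |S|. -/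
lemma interval_disj (M c x x' : ℤ) (hM : 1 ≤ M) (h : x ≠ x') :
    Disjoint (Finset.Icc (M*x+c) (M*x+c+M-1)) (Finset.Icc (M*x'+c) (M*x'+c+M-1)) := by
  rw [Finset.disjoint_left]
  intro z hz hz'
  simp only [Finset.mem_Icc] at hz hz'
  rcases lt_or_gt_of_ne h with h | h <;>
    nlinarith [mul_le_mul_of_nonneg_left (Int.add_one_le_iff.mpr h) (by linarith : (0:ℤ) ≤ M)]

lemma rec2_card (u : ℤ × ℤ) (p q : ℕ) : (Rec2 u p q).card = p * q := by
  simp only [Rec2, Finset.card_product, Int.card_Icc]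
  congr 1 <;> omega

/-- the rectangles of `F_{l,k}(S)` associated with distinct points of `S`
are pairwise disjoint, hence `|F_{l,k}(S)| = 2^{l+k} · |S|`. -/
theorem F_rectangles_disjoint_card (S : Finset (ℤ × ℤ)) (hS : S.Nonempty) (l k : ℕ) :
    (∀ p ∈ S, ∀ q ∈ S, p ≠ q →
      Disjoint
        (Rec2 (p.1 + ((2 : ℤ) ^ l - 1) * (p.1 - xmin S),
               p.2 + ((2 : ℤ) ^ k - 1) * (p.2 - ymin S)) (2 ^ l) (2 ^ k))
        (Rec2 (q.1 + ((2 : ℤ) ^ l - 1) * (q.1 - xmin S),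
               q.2 + ((2 : ℤ) ^ k - 1) * (q.2 - ymin S)) (2 ^ l) (2 ^ k))) ∧
    (F l k S).card = 2 ^ (l + k) * S.card := by
  have key : ∀ p ∈ S, ∀ q ∈ S, p ≠ q →
      Disjoint
        (Rec2 (p.1 + ((2 : ℤ) ^ l - 1) * (p.1 - xmin S),
               p.2 + ((2 : ℤ) ^ k - 1) * (p.2 - ymin S)) (2 ^ l) (2 ^ k))
        (Rec2 (q.1 + ((2 : ℤ) ^ l - 1) * (q.1 - xmin S),
               q.2 + ((2 : ℤ) ^ k - 1) * (q.2 - ymin S)) (2 ^ l) (2 ^ k)) := by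
    intro p hp q hq hne
    have hl : (1:ℤ) ≤ 2 ^ l := one_le_pow₀ one_le_two
    have hk : (1:ℤ) ≤ 2 ^ k := one_le_pow₀ one_le_two
    have h1 : ∀ a : ℤ, a + ((2:ℤ)^l - 1) * (a - xmin S) = 2^l * a + (-((2:ℤ)^l - 1) * xmin S) := by
      intro a; ring
    have h2 : ∀ a : ℤ, a + ((2:ℤ)^k - 1) * (a - ymin S) = 2^k * a + (-((2:ℤ)^k - 1) * ymin S) := by
      intro a; ring
    rw [Finset.disjoint_left]
    intro z hz hz'
    simp only [Rec2, Finset.mem_product] at hz hz'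
    rcases Prod.mk.injEq p.1 p.2 q.1 q.2 ▸ (Prod.ext_iff.not.mp hne) with h
    have : p.1 ≠ q.1 ∨ p.2 ≠ q.2 := by
      by_contra hc; push_neg at hc; exact hne (Prod.ext hc.1 hc.2)
    rcases this with h | h
    · have := interval_disj ((2:ℤ)^l) (-((2:ℤ)^l - 1) * xmin S) p.1 q.1 hl h
      rw [Finset.disjoint_left] at this
      have ha := hz.1; push_cast at ha; rw [h1] at ha
      have hb := hz'.1; push_cast at hb; rw [h1] at hb
      exact this ha hb
    · have := interval_disj ((2:ℤ)^k) (-((2:ℤ)^k - 1) * ymin S) p.2 q.2 hk h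
      rw [Finset.disjoint_left] at this
      have ha := hz.2; push_cast at ha; rw [h2] at ha
      have hb := hz'.2; push_cast at hb; rw [h2] at hb
      exact this ha hb
  refine ⟨key, ?_⟩
  rw [F, Finset.card_biUnion (fun p hp q hq hne => key p hp q hq hne),
    Finset.sum_congr rfl (fun p _ => rec2_card _ _ _), Finset.sum_const, smul_eq_mul, pow_add]
  ring
end

section
/- Full doubling preserves connectivity: if a shape S is connected, then the east full doubling D_E(S) and the north full doubling D_N(S) are connected; consequently, for all natural numbers l, k, the shape F_{l,k}(S) is connected. -/
section Aux

open Relation Finset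

private def relT (T : Finset (ℤ × ℤ)) : ℤ × ℤ → ℤ × ℤ → Prop :=
  fun a b => a ∈ T ∧ b ∈ T ∧ Adj a b

private lemma relT_symm (T : Finset (ℤ × ℤ)) : Symmetric (relT T) := by
  rintro a b ⟨ha, hb, hadj⟩
  refine ⟨hb, ha, ?_⟩
  unfold Adj at *
  omega

private lemma path_horiz_le (T : Finset (ℤ × ℤ)) (y a b : ℤ)
    (h : ∀ x, a ≤ x → x ≤ b → (x, y) ∈ T) :
    ∀ x1, a ≤ x1 → ∀ x2, x1 ≤ x2 → x2 ≤ b →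
      ReflTransGen (relT T) (x1, y) (x2, y) := by
  intro x1 ha1 x2 h12
  refine Int.le_induction (motive := fun z _ => z ≤ b → ReflTransGen (relT T) (x1, y) (z, y))
    (fun _ => ReflTransGen.refl) ?_ x2 h12
  intro n hn ih hnb
  refine ReflTransGen.tail (ih (by omega))
    ⟨h n (by omega) (by omega), h (n + 1) (by omega) (by omega), ?_⟩
  unfold Adj; simp

private lemma path_horiz (T : Finset (ℤ × ℤ)) (y a b : ℤ)
    (h : ∀ x, a ≤ x → x ≤ b → (x, y) ∈ T)
    (x1 x2 : ℤ) (h1 : a ≤ x1) (h1' : x1 ≤ b) (h2 : a ≤ x2) (h2' : x2 ≤ b) :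
    ReflTransGen (relT T) (x1, y) (x2, y) := by
  rcases le_total x1 x2 with hle | hle
  · exact path_horiz_le T y a b h x1 h1 x2 hle h2'
  · exact (haveI : Std.Symm (relT T) := ⟨fun _ _ h => relT_symm T h⟩; ReflTransGen.stdSymm.symm _ _ (path_horiz_le T y a b h x2 h2 x1 hle h1'))

private lemma path_vert_le (T : Finset (ℤ × ℤ)) (x a b : ℤ)
    (h : ∀ y, a ≤ y → y ≤ b → (x, y) ∈ T) :
    ∀ y1, a ≤ y1 → ∀ y2, y1 ≤ y2 → y2 ≤ b →
      ReflTransGen (relT T) (x, y1) (x, y2) := by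
  intro y1 ha1 y2 h12
  refine Int.le_induction (motive := fun z _ => z ≤ b → ReflTransGen (relT T) (x, y1) (x, z))
    (fun _ => ReflTransGen.refl) ?_ y2 h12
  intro n hn ih hnb
  refine ReflTransGen.tail (ih (by omega))
    ⟨h n (by omega) (by omega), h (n + 1) (by omega) (by omega), ?_⟩
  unfold Adj; simp

private lemma path_vert (T : Finset (ℤ × ℤ)) (x a b : ℤ)
    (h : ∀ y, a ≤ y → y ≤ b → (x, y) ∈ T)
    (y1 y2 : ℤ) (h1 : a ≤ y1) (h1' : y1 ≤ b) (h2 : a ≤ y2) (h2' : y2 ≤ b) :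
    ReflTransGen (relT T) (x, y1) (x, y2) := by
  rcases le_total y1 y2 with hle | hle
  · exact path_vert_le T x a b h y1 h1 y2 hle h2'
  · exact (haveI : Std.Symm (relT T) := ⟨fun _ _ h => relT_symm T h⟩; ReflTransGen.stdSymm.symm _ _ (path_vert_le T x a b h y2 h2 y1 hle h1'))

private lemma mem_Rec2 {u w : ℤ × ℤ} {p q : ℕ} :
    u ∈ Rec2 w p q ↔
      (w.1 ≤ u.1 ∧ u.1 ≤ w.1 + (p : ℤ) - 1) ∧ (w.2 ≤ u.2 ∧ u.2 ≤ w.2 + (q : ℤ) - 1) := by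
  simp [Rec2, Finset.mem_product, Finset.mem_Icc]

private lemma rect_path (T : Finset (ℤ × ℤ)) (w : ℤ × ℤ) (p q : ℕ)
    (hsub : Rec2 w p q ⊆ T) {u v : ℤ × ℤ}
    (hu : u ∈ Rec2 w p q) (hv : v ∈ Rec2 w p q) :
    ReflTransGen (relT T) u v := by
  obtain ⟨ux, uy⟩ := u
  obtain ⟨vx, vy⟩ := v
  rw [mem_Rec2] at hu hv
  simp only at hu hv
  have h1 : ReflTransGen (relT T) (ux, uy) (vx, uy) := by
    refine path_horiz T uy w.1 (w.1 + (p:ℤ) - 1) (fun x hx hx' => hsub ?_) ux vx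
      hu.1.1 hu.1.2 hv.1.1 hv.1.2
    rw [mem_Rec2]; exact ⟨⟨hx, hx'⟩, hu.2⟩
  have h2 : ReflTransGen (relT T) (vx, uy) (vx, vy) := by
    refine path_vert T vx w.2 (w.2 + (q:ℤ) - 1) (fun y hy hy' => hsub ?_) uy vy
      hu.2.1 hu.2.2 hv.2.1 hv.2.2
    rw [mem_Rec2]; exact ⟨hv.1, ⟨hy, hy'⟩⟩
  exact h1.trans h2

/-- the rectangle attached to point `p` in `F l k S`. -/
private noncomputable def RectF (l k : ℕ) (S : Finset (ℤ × ℤ)) (p : ℤ × ℤ) : Finset (ℤ × ℤ) :=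
  Rec2 (p.1 + ((2 : ℤ) ^ l - 1) * (p.1 - xmin S),
        p.2 + ((2 : ℤ) ^ k - 1) * (p.2 - ymin S)) (2 ^ l) (2 ^ k)

private lemma F_eq (l k : ℕ) (S : Finset (ℤ × ℤ)) :
    F l k S = S.biUnion (RectF l k S) := rfl

private lemma adj_comp (a b : ℤ × ℤ)
    (h : (b.1 = a.1 + 1 ∧ b.2 = a.2) ∨ (b.1 = a.1 - 1 ∧ b.2 = a.2) ∨
         (b.2 = a.2 + 1 ∧ b.1 = a.1) ∨ (b.2 = a.2 - 1 ∧ b.1 = a.1)) : Adj a b := by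
  unfold Adj; omega

private lemma corner_adj (l k : ℕ) (S : Finset (ℤ × ℤ)) {p q : ℤ × ℤ} (hadj : Adj p q) :
    ∃ w1 ∈ RectF l k S p, ∃ w2 ∈ RectF l k S q, Adj w1 w2 := by
  have hL : (1 : ℤ) ≤ 2 ^ l := one_le_pow₀ (by norm_num)
  have hK : (1 : ℤ) ≤ 2 ^ k := one_le_pow₀ (by norm_num)
  obtain ⟨px, py⟩ := p
  obtain ⟨qx, qy⟩ := q
  unfold Adj at hadj
  simp only at hadj ⊢
  set m := xmin S
  set n := ymin S
  set L := (2 : ℤ) ^ l with hLdef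
  set K := (2 : ℤ) ^ k with hKdef
  have hcast : ((2 ^ l : ℕ) : ℤ) = L := by push_cast [hLdef]; ring
  have hcast' : ((2 ^ k : ℕ) : ℤ) = K := by push_cast [hKdef]; ring
  have hcases : (qx = px + 1 ∧ qy = py) ∨ (qx = px - 1 ∧ qy = py) ∨
      (qy = py + 1 ∧ qx = px) ∨ (qy = py - 1 ∧ qx = px) := by omega
  rcases hcases with ⟨h1, h2⟩ | ⟨h1, h2⟩ | ⟨h1, h2⟩ | ⟨h1, h2⟩
  · -- east: qx = px + 1
    refine ⟨(px + (L - 1) * (px - m) + (L - 1), py + (K - 1) * (py - n)), ?_,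
            ((px + 1) + (L - 1) * ((px + 1) - m), py + (K - 1) * (py - n)), ?_, ?_⟩
    · rw [RectF, mem_Rec2]; simp only [hcast, hcast', h1, h2]
      refine ⟨⟨?_, ?_⟩, ?_, ?_⟩ <;> linarith
    · rw [RectF, mem_Rec2]; simp only [hcast, hcast', h1, h2]
      refine ⟨⟨?_, ?_⟩, ?_, ?_⟩ <;> linarith
    · exact adj_comp _ _ (Or.inl ⟨by ring, by ring⟩)
  · -- west: qx = px - 1
    refine ⟨(px + (L - 1) * (px - m), py + (K - 1) * (py - n)), ?_,
            ((px - 1) + (L - 1) * ((px - 1) - m) + (L - 1), py + (K - 1) * (py - n)), ?_, ?_⟩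
    · rw [RectF, mem_Rec2]; simp only [hcast, hcast', h1, h2]
      refine ⟨⟨?_, ?_⟩, ?_, ?_⟩ <;> linarith
    · rw [RectF, mem_Rec2]; simp only [hcast, hcast', h1, h2]
      refine ⟨⟨?_, ?_⟩, ?_, ?_⟩ <;> linarith
    · exact adj_comp _ _ (Or.inr (Or.inl ⟨by ring, by ring⟩))
  · -- north: qy = py + 1
    refine ⟨(px + (L - 1) * (px - m), py + (K - 1) * (py - n) + (K - 1)), ?_,
            (px + (L - 1) * (px - m), (py + 1) + (K - 1) * ((py + 1) - n)), ?_, ?_⟩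
    · rw [RectF, mem_Rec2]; simp only [hcast, hcast', h1, h2]
      refine ⟨⟨?_, ?_⟩, ?_, ?_⟩ <;> linarith
    · rw [RectF, mem_Rec2]; simp only [hcast, hcast', h1, h2]
      refine ⟨⟨?_, ?_⟩, ?_, ?_⟩ <;> linarith
    · exact adj_comp _ _ (Or.inr (Or.inr (Or.inl ⟨by ring, by ring⟩)))
  · -- south: qy = py - 1
    refine ⟨(px + (L - 1) * (px - m), py + (K - 1) * (py - n)), ?_,
            (px + (L - 1) * (px - m), (py - 1) + (K - 1) * ((py - 1) - n) + (K - 1)), ?_, ?_⟩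
    · rw [RectF, mem_Rec2]; simp only [hcast, hcast', h1, h2]
      refine ⟨⟨?_, ?_⟩, ?_, ?_⟩ <;> linarith
    · rw [RectF, mem_Rec2]; simp only [hcast, hcast', h1, h2]
      refine ⟨⟨?_, ?_⟩, ?_, ?_⟩ <;> linarith
    · exact adj_comp _ _ (Or.inr (Or.inr (Or.inr ⟨by ring, by ring⟩)))

private lemma F_connected (l k : ℕ) (S : Finset (ℤ × ℤ)) (hconn : ShapeConnected S) :
    ShapeConnected (F l k S) := by
  intro u hu v hv
  rw [F_eq] at hu hv
  obtain ⟨p, hp, hup⟩ := Finset.mem_biUnion.1 hu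
  obtain ⟨r, hr, hvr⟩ := Finset.mem_biUnion.1 hv
  have hsub : ∀ a ∈ S, RectF l k S a ⊆ F l k S := fun a ha => by
    rw [F_eq]; exact Finset.subset_biUnion_of_mem _ ha
  have key : ∀ r' : ℤ × ℤ,
      Relation.ReflTransGen (fun a b => a ∈ S ∧ b ∈ S ∧ Adj a b) p r' →
      r' ∈ S → ∀ v' ∈ RectF l k S r', Relation.ReflTransGen (relT (F l k S)) u v' := by
    intro r' hpath
    induction hpath with
    | refl =>
      intro _ v' hv'
      exact rect_path _ _ _ _ (hsub p hp) hup hv'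
    | @tail b c hab hbc ih =>
      obtain ⟨hbS, hcS, hadj⟩ := hbc
      intro _ v' hv'
      obtain ⟨w1, hw1, w2, hw2, hadjw⟩ := corner_adj l k S hadj
      have p1 : Relation.ReflTransGen (relT (F l k S)) u w1 := ih hbS w1 hw1
      have p2 : Relation.ReflTransGen (relT (F l k S)) w1 w2 :=
        ReflTransGen.single ⟨hsub b hbS hw1, hsub c hcS hw2, hadjw⟩
      have p3 : Relation.ReflTransGen (relT (F l k S)) w2 v' :=
        rect_path _ _ _ _ (hsub c hcS) hw2 hv'
      exact (p1.trans p2).trans p3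
  exact key r (hconn p hp r hr) hr v hvr

private lemma DE_eq (S : Finset (ℤ × ℤ)) : DE S = F 1 0 S := by
  ext ⟨x, y⟩
  simp only [DE, F, Rec2, Finset.mem_biUnion, Finset.mem_union, Finset.mem_image,
    Finset.mem_product, Finset.mem_Icc, Prod.mk.injEq, Prod.exists]
  push_cast
  norm_num
  constructor
  · rintro (⟨a, ha, hx⟩ | ⟨a, ha, hx⟩) <;>
      exact ⟨a, y, ha, ⟨by omega, by omega⟩, le_refl y, le_refl y⟩
  · rintro ⟨a, b, hab, ⟨hx1, hx2⟩, hy1, hy2⟩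
    have hb : b = y := by omega
    subst hb
    have hor : 2 * a - xmin S = x ∨ 2 * a - xmin S + 1 = x := by omega
    rcases hor with h | h
    · exact Or.inl ⟨a, hab, h⟩
    · exact Or.inr ⟨a, hab, h⟩

private lemma DN_eq (S : Finset (ℤ × ℤ)) : DN S = F 0 1 S := by
  ext ⟨x, y⟩
  simp only [DN, F, Rec2, Finset.mem_biUnion, Finset.mem_union, Finset.mem_image,
    Finset.mem_product, Finset.mem_Icc, Prod.mk.injEq, Prod.exists]
  push_cast
  norm_num
  constructor
  · rintro (⟨b, hab, hy⟩ | ⟨b, hab, hy⟩) <;>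
      exact ⟨x, b, hab, ⟨le_refl x, le_refl x⟩, by omega, by omega⟩
  · rintro ⟨a, b, hab, ⟨hx1, hx2⟩, hy1, hy2⟩
    have ha : a = x := by omega
    subst ha
    have hor : 2 * b - ymin S = y ∨ 2 * b - ymin S + 1 = y := by omega
    rcases hor with h | h
    · exact Or.inl ⟨b, hab, h⟩
    · exact Or.inr ⟨b, hab, h⟩

end Aux

/-- full doubling preserves connectivity, and consequently so does every
reconfiguration function `F_{l,k}`. -/
theorem full_doubling_preserves_connectivity (S : Finset (ℤ × ℤ)) (hS : S.Nonempty)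
    (hconn : ShapeConnected S) :
    ShapeConnected (DE S) ∧ ShapeConnected (DN S) ∧
      ∀ l k : ℕ, ShapeConnected (F l k S) := by
  refine ⟨?_, ?_, fun l k => F_connected l k S hconn⟩
  · rw [DE_eq]; exact F_connected 1 0 S hconn
  · rw [DN_eq]; exact F_connected 0 1 S hconn
end

section
/- A connected shape S_F can be obtained (up to translation) from a connected shape S_I through a finite sequence of east and north RC doubling operations if and only if all of the following hold: B(S_I) = B(S_F); m_C(S_I) = m_C(S_F) and m_R(S_I) = m_R(S_F); M_C(S_I, i) ≤ M_C(S_F, i) for every i with 0 ≤ i < m_C(S_I); and M_R(S_I, i) ≤ M_R(S_F, i) for every i with 0 ≤ i < m_R(S_I). -/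
namespace RCAux

open Finset

lemma mem_colS {S : Finset (ℤ × ℤ)} {x y : ℤ} : y ∈ colS S x ↔ (x, y) ∈ S := by
  simp only [colS, Finset.mem_image, Finset.mem_filter]
  constructor
  · rintro ⟨⟨a, b⟩, ⟨h, rfl⟩, rfl⟩; exact h
  · intro h; exact ⟨(x, y), ⟨h, rfl⟩, rfl⟩

lemma mem_rowS {S : Finset (ℤ × ℤ)} {x y : ℤ} : x ∈ rowS S y ↔ (x, y) ∈ S := by
  simp only [rowS, Finset.mem_image, Finset.mem_filter]
  constructor
  · rintro ⟨⟨a, b⟩, ⟨h, rfl⟩, rfl⟩; exact h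
  · intro h; exact ⟨(x, y), ⟨h, rfl⟩, rfl⟩

lemma xmin_le {S : Finset (ℤ × ℤ)} {p : ℤ × ℤ} (hp : p ∈ S) : xmin S ≤ p.1 := by
  have h1 : p.1 ∈ S.image Prod.fst := Finset.mem_image_of_mem _ hp
  have h2 := Finset.min_le h1
  unfold xmin
  rcases hmin : (S.image Prod.fst).min with _ | a
  · have he := Finset.min_eq_top.mp hmin
    simp [he] at h1
  · rw [hmin] at h2
    show a ≤ _
    exact WithTop.coe_le_coe.1 h2

lemma exists_xmin {S : Finset (ℤ × ℤ)} (h : S.Nonempty) : ∃ p ∈ S, p.1 = xmin S := by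
  have h' : (S.image Prod.fst).Nonempty := h.image _
  obtain ⟨a, ha, hmin⟩ := Finset.exists_min_image S Prod.fst h
  refine ⟨a, ha, le_antisymm ?_ (xmin_le ha)⟩
  unfold xmin
  rcases hm : (S.image Prod.fst).min with _ | b
  · have he := Finset.min_eq_top.mp hm
    simp [he] at h'
  · have hb : b ∈ S.image Prod.fst := Finset.mem_of_min hm
    obtain ⟨q, hq, rfl⟩ := Finset.mem_image.1 hb
    show a.1 ≤ q.1
    exact hmin q hq

lemma ymin_le {S : Finset (ℤ × ℤ)} {p : ℤ × ℤ} (hp : p ∈ S) : ymin S ≤ p.2 := by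
  have h1 : p.2 ∈ S.image Prod.snd := Finset.mem_image_of_mem _ hp
  have h2 := Finset.min_le h1
  unfold ymin
  rcases hmin : (S.image Prod.snd).min with _ | a
  · have he := Finset.min_eq_top.mp hmin
    simp [he] at h1
  · rw [hmin] at h2
    show a ≤ _
    exact WithTop.coe_le_coe.1 h2

lemma exists_ymin {S : Finset (ℤ × ℤ)} (h : S.Nonempty) : ∃ p ∈ S, p.2 = ymin S := by
  have h' : (S.image Prod.snd).Nonempty := h.image _
  obtain ⟨a, ha, hmin⟩ := Finset.exists_min_image S Prod.snd h
  refine ⟨a, ha, le_antisymm ?_ (ymin_le ha)⟩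
  unfold ymin
  rcases hm : (S.image Prod.snd).min with _ | b
  · have he := Finset.min_eq_top.mp hm
    simp [he] at h'
  · have hb : b ∈ S.image Prod.snd := Finset.mem_of_min hm
    obtain ⟨q, hq, rfl⟩ := Finset.mem_image.1 hb
    show a.2 ≤ q.2
    exact hmin q hq

lemma xmin_congr {S T : Finset (ℤ × ℤ)} (h : S.image Prod.fst = T.image Prod.fst) :
    xmin S = xmin T := by unfold xmin; rw [h]

lemma ymin_congr {S T : Finset (ℤ × ℤ)} (h : S.image Prod.snd = T.image Prod.snd) :
    ymin S = ymin T := by unfold ymin; rw [h]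

lemma Icc_succ_right' (a b : ℤ) (h : a ≤ b + 1) :
    Finset.Icc a (b + 1) = insert (b + 1) (Finset.Icc a b) := by
  ext x; simp only [Finset.mem_Icc, Finset.mem_insert]; omega

lemma phiC_of_le {S : Finset (ℤ × ℤ)} {x : ℤ} (h : x ≤ xmin S) : phiC S x = 0 := by
  unfold phiC
  rw [Finset.Icc_eq_empty (by omega)]
  simp

lemma phiC_mono {S : Finset (ℤ × ℤ)} : Monotone (phiC S) := by
  intro x y hxy
  exact Finset.card_le_card (Finset.filter_subset_filter _ (Finset.Icc_subset_Icc_right hxy))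

lemma phiC_succ {S : Finset (ℤ × ℤ)} {x : ℤ} (h : xmin S ≤ x) :
    phiC S (x + 1) = phiC S x + (if colS S (x + 1) = colS S x then 0 else 1) := by
  unfold phiC
  rw [Icc_succ_right' _ _ (by omega), Finset.filter_insert]
  have hnm : x + 1 ∉ Finset.Icc (xmin S + 1) x := by simp
  split_ifs with h1 h2 h2
  · simp at h1; exact absurd h2 h1
  · rw [Finset.card_insert_of_notMem (fun hc => hnm (Finset.mem_of_mem_filter _ hc))]
  · rfl
  · simp only [ne_eq, not_not] at h1
    have : x + 1 - 1 = x := by ring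
    rw [this] at h1
    exact absurd h1 h2

/-- If two columns at `x ≤ y` (with `xmin S ≤ x`) have the same `phiC` value,
all columns in between are equal. -/
lemma colS_eq_of_phiC_eq {S : Finset (ℤ × ℤ)} {x y : ℤ} (h0 : xmin S ≤ x) (hxy : x ≤ y)
    (hphi : phiC S x = phiC S y) : colS S x = colS S y := by
  revert hphi
  refine Int.le_induction (motive := fun y _ => phiC S x = phiC S y → colS S x = colS S y) ?_ ?_ y hxy
  · intro _; rfl
  · intro z hz ih hphi
    have hstep := phiC_succ (S := S) (x := z) (by omega)
    have h1 : phiC S x ≤ phiC S z := phiC_mono (by omega)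
    have h2 : phiC S z ≤ phiC S (z + 1) := phiC_mono (by omega)
    split_ifs at hstep with hc
    · rw [ih (by omega), hc]
    · omega

lemma phiC_succ_le {S : Finset (ℤ × ℤ)} (x : ℤ) : phiC S (x + 1) ≤ phiC S x + 1 := by
  by_cases h : xmin S ≤ x
  · rw [phiC_succ h]; split_ifs <;> omega
  · rw [phiC_of_le (show x + 1 ≤ xmin S by omega)]; omega

/-! ### Transpose -/

def tr (S : Finset (ℤ × ℤ)) : Finset (ℤ × ℤ) := S.image Prod.swap

lemma mem_tr {S : Finset (ℤ × ℤ)} {p : ℤ × ℤ} : p ∈ tr S ↔ p.swap ∈ S := by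
  unfold tr
  constructor
  · rintro h
    obtain ⟨q, hq, rfl⟩ := Finset.mem_image.1 h
    simpa using hq
  · intro h
    exact Finset.mem_image.2 ⟨p.swap, h, by simp⟩

lemma mem_tr' {S : Finset (ℤ × ℤ)} {x y : ℤ} : (x, y) ∈ tr S ↔ (y, x) ∈ S := mem_tr

lemma tr_tr {S : Finset (ℤ × ℤ)} : tr (tr S) = S := by
  ext p; rw [mem_tr, mem_tr]; simp

lemma image_fst_tr {S : Finset (ℤ × ℤ)} : (tr S).image Prod.fst = S.image Prod.snd := by
  unfold tr; rw [Finset.image_image]; rfl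

lemma image_snd_tr {S : Finset (ℤ × ℤ)} : (tr S).image Prod.snd = S.image Prod.fst := by
  unfold tr; rw [Finset.image_image]; rfl

lemma xmin_tr {S : Finset (ℤ × ℤ)} : xmin (tr S) = ymin S := by
  unfold xmin ymin; rw [image_fst_tr]

lemma ymin_tr {S : Finset (ℤ × ℤ)} : ymin (tr S) = xmin S := by
  unfold xmin ymin; rw [image_snd_tr]

lemma colS_tr {S : Finset (ℤ × ℤ)} {x : ℤ} : colS (tr S) x = rowS S x := by
  ext y; rw [mem_colS, mem_rowS, mem_tr']

lemma rowS_tr {S : Finset (ℤ × ℤ)} {y : ℤ} : rowS (tr S) y = colS S y := by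
  ext x; rw [mem_colS, mem_rowS, mem_tr']

lemma phiC_tr {S : Finset (ℤ × ℤ)} : phiC (tr S) = phiR S := by
  funext x
  unfold phiC phiR
  rw [xmin_tr]
  congr 1
  apply Finset.filter_congr
  intro z _
  rw [colS_tr, colS_tr]

lemma phiR_tr {S : Finset (ℤ × ℤ)} : phiR (tr S) = phiC S := by
  conv_rhs => rw [← tr_tr (S := S), phiC_tr]

lemma mC_tr {S : Finset (ℤ × ℤ)} : mC (tr S) = mR S := by
  unfold mC mR; rw [image_fst_tr, phiC_tr]

lemma mR_tr {S : Finset (ℤ × ℤ)} : mR (tr S) = mC S := by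
  unfold mC mR; rw [image_snd_tr, phiR_tr]

lemma MC_tr {S : Finset (ℤ × ℤ)} {i : ℕ} : MC (tr S) i = MR S i := by
  unfold MC MR; rw [image_fst_tr, phiC_tr]

lemma MR_tr {S : Finset (ℤ × ℤ)} {i : ℕ} : MR (tr S) i = MC S i := by
  unfold MC MR; rw [image_snd_tr, phiR_tr]

lemma KC_tr {S : Finset (ℤ × ℤ)} : KC (tr S) = tr (KR S) := by
  unfold KC KR
  rw [phiC_tr]
  unfold tr
  rw [Finset.image_image, Finset.image_image]
  rfl

lemma KR_tr {S : Finset (ℤ × ℤ)} : KR (tr S) = tr (KC S) := by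
  conv_rhs => rw [← tr_tr (S := S), KC_tr, tr_tr]

lemma adj_swap {a b : ℤ × ℤ} (h : Adj a b) : Adj a.swap b.swap := by
  unfold Adj at *; simp only [Prod.fst_swap, Prod.snd_swap]; omega

lemma adj_symm {a b : ℤ × ℤ} (h : Adj a b) : Adj b a := by
  unfold Adj at *; omega

lemma connected_tr {S : Finset (ℤ × ℤ)} (h : ShapeConnected S) : ShapeConnected (tr S) := by
  intro u hu v hv
  have hpath := h u.swap (mem_tr.1 hu) v.swap (mem_tr.1 hv)
  have := Relation.ReflTransGen.lift (r := fun a b => a ∈ S ∧ b ∈ S ∧ Adj a b)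
    (p := fun a b => a ∈ tr S ∧ b ∈ tr S ∧ Adj a b) Prod.swap
    (fun a b hab => ⟨mem_tr.2 (by simpa using hab.1), mem_tr.2 (by simpa using hab.2.1),
      adj_swap hab.2.2⟩) _ _ hpath
  simpa [Function.onFun] using this

lemma nonempty_tr {S : Finset (ℤ × ℤ)} (h : S.Nonempty) : (tr S).Nonempty := h.image _

lemma translate_tr {S : Finset (ℤ × ℤ)} {v : ℤ × ℤ} :
    tr (translateSh v S) = translateSh v.swap (tr S) := by
  ext p
  rw [mem_tr]
  unfold translateSh
  simp only [Finset.mem_image]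
  constructor
  · rintro ⟨q, hq, hh⟩
    refine ⟨q.swap, mem_tr.2 (by simpa using hq), ?_⟩
    have h1 : q.1 + v.1 = p.2 := congrArg Prod.fst hh
    have h2 : q.2 + v.2 = p.1 := congrArg Prod.snd hh
    simp only [Prod.fst_swap, Prod.snd_swap]
    exact Prod.ext (by simpa using h2) (by simpa using h1)
  · rintro ⟨q, hq, hh⟩
    refine ⟨q.swap, mem_tr.1 hq, ?_⟩
    have h1 : q.1 + v.2 = p.1 := congrArg Prod.fst hh
    have h2 : q.2 + v.1 = p.2 := congrArg Prod.snd hh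
    simp only [Prod.fst_swap, Prod.snd_swap]
    exact Prod.ext (by simpa using h2) (by simpa using h1)

lemma RCN_eq_tr {S : Finset (ℤ × ℤ)} {D : Finset ℤ} : RCN S D = tr (RCE (tr S) D) := by
  ext p
  rw [mem_tr]
  unfold RCN RCE
  simp only [Finset.mem_union, Finset.mem_image, Finset.mem_filter, mem_tr]
  constructor
  · rintro (⟨q, hq, rfl⟩ | ⟨q, ⟨hq, hd⟩, rfl⟩)
    · exact Or.inl ⟨q.swap, by simpa using hq, by simp⟩
    · exact Or.inr ⟨q.swap, ⟨by simpa using hq, by simpa using hd⟩, by simp⟩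
  · rintro (⟨q, hq, hh⟩ | ⟨q, ⟨hq, hd⟩, hh⟩)
    · refine Or.inl ⟨q.swap, hq, ?_⟩
      have := congrArg Prod.swap hh
      simpa using this
    · refine Or.inr ⟨q.swap, ⟨hq, hd⟩, ?_⟩
      have := congrArg Prod.swap hh
      simpa using this

/-! ### Connectivity: support is an interval -/

lemma adj_cases {a b : ℤ × ℤ} (h : Adj a b) :
    (a.1 = b.1 ∧ (a.2 = b.2 + 1 ∨ a.2 = b.2 - 1)) ∨
    (a.2 = b.2 ∧ (a.1 = b.1 + 1 ∨ a.1 = b.1 - 1)) := by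
  unfold Adj at h; omega

lemma mem_fst_between {S : Finset (ℤ × ℤ)} (hc : ShapeConnected S) {p q : ℤ × ℤ}
    (hp : p ∈ S) (hq : q ∈ S) {x : ℤ}
    (h : (p.1 ≤ x ∧ x ≤ q.1) ∨ (q.1 ≤ x ∧ x ≤ p.1)) : ∃ y, (x, y) ∈ S := by
  have key : ∀ q', Relation.ReflTransGen (fun a b => a ∈ S ∧ b ∈ S ∧ Adj a b) p q' →
      ∀ z : ℤ, ((p.1 ≤ z ∧ z ≤ q'.1) ∨ (q'.1 ≤ z ∧ z ≤ p.1)) → ∃ y, (z, y) ∈ S := by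
    intro q' hpath
    induction hpath with
    | refl =>
        intro z hz
        have : z = p.1 := by omega
        exact ⟨p.2, by rwa [this, Prod.mk.eta]⟩
    | tail hab hbc ih =>
        rename_i b c
        intro z hz
        obtain ⟨hbS, hcS, hadj⟩ := hbc
        rcases adj_cases hadj with ⟨h1, h2⟩ | ⟨h1, h2⟩
        · exact ih z (by omega)
        · by_cases hx : (p.1 ≤ z ∧ z ≤ b.1) ∨ (b.1 ≤ z ∧ z ≤ p.1)
          · exact ih z hx
          · have : z = c.1 := by omega
            exact ⟨c.2, by rwa [this, Prod.mk.eta]⟩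
  exact key q (hc p hp q hq) x h

lemma mem_fst_between' {S : Finset (ℤ × ℤ)} (hc : ShapeConnected S) {u v x : ℤ}
    (hu : u ∈ S.image Prod.fst) (hv : v ∈ S.image Prod.fst) (h1 : u ≤ x) (h2 : x ≤ v) :
    x ∈ S.image Prod.fst := by
  obtain ⟨p, hp, rfl⟩ := Finset.mem_image.1 hu
  obtain ⟨q, hq, rfl⟩ := Finset.mem_image.1 hv
  obtain ⟨y, hy⟩ := mem_fst_between hc hp hq (Or.inl ⟨h1, h2⟩)
  exact Finset.mem_image.2 ⟨(x, y), hy, rfl⟩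

/-- Intermediate value property for `phiC`. -/
lemma phiC_ivt {S : Finset (ℤ × ℤ)} {x : ℤ} (hx : xmin S ≤ x) :
    ∀ i ≤ phiC S x, ∃ z, xmin S ≤ z ∧ z ≤ x ∧ phiC S z = i := by
  refine Int.le_induction
    (motive := fun x _ => ∀ i ≤ phiC S x, ∃ z, xmin S ≤ z ∧ z ≤ x ∧ phiC S z = i) ?_ ?_ x hx
  · intro i hi
    rw [phiC_of_le le_rfl] at hi
    exact ⟨xmin S, le_rfl, le_rfl, by rw [phiC_of_le le_rfl]; omega⟩
  · intro z hz ih i hi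
    by_cases hle : i ≤ phiC S z
    · obtain ⟨w, hw1, hw2, hw3⟩ := ih i hle
      exact ⟨w, hw1, by omega, hw3⟩
    · refine ⟨z + 1, by omega, le_rfl, ?_⟩
      have := phiC_succ (S := S) hz
      split_ifs at this <;> omega

/-! ### Structure of `KC` -/

lemma mem_KC {S : Finset (ℤ × ℤ)} {q : ℤ × ℤ} :
    q ∈ KC S ↔ ∃ p ∈ S, ((phiC S p.1 : ℤ), p.2) = q := by
  unfold KC; simp [Finset.mem_image]

lemma image_snd_KC {S : Finset (ℤ × ℤ)} : (KC S).image Prod.snd = S.image Prod.snd := by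
  unfold KC; rw [Finset.image_image]; rfl

lemma ymin_KC {S : Finset (ℤ × ℤ)} : ymin (KC S) = ymin S := ymin_congr image_snd_KC

lemma rowS_KC {S : Finset (ℤ × ℤ)} {y : ℤ} :
    rowS (KC S) y = (rowS S y).image (fun x => (phiC S x : ℤ)) := by
  ext a
  rw [mem_rowS]
  simp only [Finset.mem_image, mem_KC]
  constructor
  · rintro ⟨p, hp, hpq⟩
    have h1 : (phiC S p.1 : ℤ) = a := congrArg Prod.fst hpq
    have h2 : p.2 = y := congrArg Prod.snd hpq
    exact ⟨p.1, mem_rowS.2 (by rw [← h2]; exact hp), h1⟩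
  · rintro ⟨x, hx, rfl⟩
    exact ⟨(x, y), mem_rowS.1 hx, rfl⟩

lemma rowS_KC_subset {S : Finset (ℤ × ℤ)} {y y' : ℤ}
    (h : rowS (KC S) y ⊆ rowS (KC S) y') : rowS S y ⊆ rowS S y' := by
  intro x hx
  have hmem : ((phiC S x : ℤ)) ∈ rowS (KC S) y := by
    rw [rowS_KC]; exact Finset.mem_image_of_mem _ hx
  have := h hmem
  rw [rowS_KC] at this
  obtain ⟨x', hx', hphi⟩ := Finset.mem_image.1 this
  have hphi' : phiC S x' = phiC S x := by exact_mod_cast hphi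
  have hxS : (x, y) ∈ S := mem_rowS.1 hx
  have hx'S : (x', y') ∈ S := mem_rowS.1 hx'
  have hcol : colS S x' = colS S x := by
    rcases le_total x' x with hle | hle
    · exact colS_eq_of_phiC_eq (xmin_le hx'S) hle hphi'
    · exact (colS_eq_of_phiC_eq (xmin_le hxS) hle hphi'.symm).symm
  have : y' ∈ colS S x := by
    rw [← hcol]; exact mem_colS.2 hx'S
  exact mem_rowS.2 (mem_colS.1 this)

lemma rowS_KC_pattern {S : Finset (ℤ × ℤ)} {y y' : ℤ} :
    rowS (KC S) y = rowS (KC S) y' ↔ rowS S y = rowS S y' := by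
  constructor
  · intro h
    exact le_antisymm (rowS_KC_subset h.le) (rowS_KC_subset h.ge)
  · intro h
    rw [rowS_KC, rowS_KC, h]

lemma phiR_KC {S : Finset (ℤ × ℤ)} : phiR (KC S) = phiR S := by
  funext y
  unfold phiR
  rw [ymin_KC]
  congr 1
  apply Finset.filter_congr
  intro z _
  simp only [ne_eq, eq_iff_iff]
  rw [rowS_KC_pattern]

lemma MR_KC {S : Finset (ℤ × ℤ)} {i : ℕ} : MR (KC S) i = MR S i := by
  unfold MR; rw [image_snd_KC, phiR_KC]

lemma mR_KC {S : Finset (ℤ × ℤ)} : mR (KC S) = mR S := by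
  unfold mR; rw [image_snd_KC, phiR_KC]

lemma Baseline_formula {S : Finset (ℤ × ℤ)} :
    Baseline S = S.image fun p => ((phiC S p.1 : ℤ), (phiR S p.2 : ℤ)) := by
  unfold Baseline KR
  rw [phiR_KC]
  unfold KC
  rw [Finset.image_image]
  rfl

lemma phiC_KR {S : Finset (ℤ × ℤ)} : phiC (KR S) = phiC S := by
  have h1 : KR S = tr (KC (tr S)) := by rw [KC_tr, tr_tr]
  rw [h1, phiC_tr, phiR_KC, phiR_tr]

lemma Baseline_tr {S : Finset (ℤ × ℤ)} : Baseline (tr S) = tr (Baseline S) := by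
  rw [Baseline_formula, Baseline_formula, phiC_tr, phiR_tr]
  unfold tr
  rw [Finset.image_image, Finset.image_image]
  rfl

/-! ### Translation lemmas -/

lemma mem_translate {S : Finset (ℤ × ℤ)} {v p : ℤ × ℤ} :
    p ∈ translateSh v S ↔ (p.1 - v.1, p.2 - v.2) ∈ S := by
  unfold translateSh
  simp only [Finset.mem_image]
  constructor
  · rintro ⟨q, hq, rfl⟩
    simpa using hq
  · intro h
    exact ⟨_, h, by simp⟩

lemma translate_translate {S : Finset (ℤ × ℤ)} {a b : ℤ × ℤ} :
    translateSh a (translateSh b S) = translateSh (a.1 + b.1, a.2 + b.2) S := by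
  ext p
  rw [mem_translate, mem_translate, mem_translate]
  have h1 : p.1 - a.1 - b.1 = p.1 - (a.1 + b.1) := by ring
  have h2 : p.2 - a.2 - b.2 = p.2 - (a.2 + b.2) := by ring
  rw [h1, h2]

lemma nonempty_translate {S : Finset (ℤ × ℤ)} {v : ℤ × ℤ} (h : S.Nonempty) :
    (translateSh v S).Nonempty := h.image _

lemma connected_translate {S : Finset (ℤ × ℤ)} {v : ℤ × ℤ} (h : ShapeConnected S) :
    ShapeConnected (translateSh v S) := by
  intro u hu v' hv'
  have hu' := mem_translate.1 hu
  have hv'' := mem_translate.1 hv'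
  have hpath := h _ hu' _ hv''
  have hlift := Relation.ReflTransGen.lift
    (r := fun a b => a ∈ S ∧ b ∈ S ∧ Adj a b)
    (p := fun a b => a ∈ translateSh v S ∧ b ∈ translateSh v S ∧ Adj a b)
    (fun q => (q.1 + v.1, q.2 + v.2))
    (fun a b hab => ⟨mem_translate.2 (by simpa using hab.1),
      mem_translate.2 (by simpa using hab.2.1), by unfold Adj at *; simp; omega⟩) _ _ hpath
  have e1 : (u.1 - v.1 + v.1, u.2 - v.2 + v.2) = u := by
    apply Prod.ext <;> simp
  have e2 : (v'.1 - v.1 + v.1, v'.2 - v.2 + v.2) = v' := by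
    apply Prod.ext <;> simp
  simpa only [Function.onFun, e1, e2] using hlift

lemma image_fst_translate {S : Finset (ℤ × ℤ)} {v : ℤ × ℤ} :
    (translateSh v S).image Prod.fst = (S.image Prod.fst).image (· + v.1) := by
  unfold translateSh
  rw [Finset.image_image, Finset.image_image]
  rfl

lemma image_snd_translate {S : Finset (ℤ × ℤ)} {v : ℤ × ℤ} :
    (translateSh v S).image Prod.snd = (S.image Prod.snd).image (· + v.2) := by
  unfold translateSh
  rw [Finset.image_image, Finset.image_image]
  rfl

lemma xmin_translate {S : Finset (ℤ × ℤ)} {v : ℤ × ℤ} (h : S.Nonempty) :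
    xmin (translateSh v S) = xmin S + v.1 := by
  obtain ⟨p, hp, hpx⟩ := exists_xmin h
  obtain ⟨q, hq, hqx⟩ := exists_xmin (nonempty_translate (v := v) h)
  have h1 : xmin (translateSh v S) ≤ xmin S + v.1 := by
    have : (p.1 + v.1, p.2 + v.2) ∈ translateSh v S := by
      rw [mem_translate]; simpa using hp
    have := xmin_le this
    simpa [hpx] using this
  have h2 : xmin S + v.1 ≤ xmin (translateSh v S) := by
    have hq' := mem_translate.1 hq
    have := xmin_le hq'
    omega
  omega

lemma colS_translate {S : Finset (ℤ × ℤ)} {v : ℤ × ℤ} {x : ℤ} :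
    colS (translateSh v S) x = (colS S (x - v.1)).image (· + v.2) := by
  ext y
  rw [mem_colS, mem_translate]
  simp only [Finset.mem_image]
  constructor
  · intro h
    exact ⟨y - v.2, mem_colS.2 h, by ring⟩
  · rintro ⟨b, hb, rfl⟩
    have := mem_colS.1 hb
    simpa using this

lemma colS_translate_pattern {S : Finset (ℤ × ℤ)} {v : ℤ × ℤ} {x x' : ℤ} :
    colS (translateSh v S) x = colS (translateSh v S) x' ↔
      colS S (x - v.1) = colS S (x' - v.1) := by
  rw [colS_translate, colS_translate]
  constructor
  · intro h
    have hinj : Function.Injective (· + v.2 : ℤ → ℤ) := fun a b hab => by simpa using hab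
    exact Finset.image_injective hinj h
  · intro h; rw [h]

lemma phiC_translate {S : Finset (ℤ × ℤ)} {v : ℤ × ℤ} (h : S.Nonempty) {x : ℤ} :
    phiC (translateSh v S) x = phiC S (x - v.1) := by
  unfold phiC
  rw [xmin_translate h]
  have himg : Finset.Icc (xmin S + v.1 + 1) x =
      (Finset.Icc (xmin S + 1) (x - v.1)).image (· + v.1) := by
    ext z
    simp only [Finset.mem_Icc, Finset.mem_image]
    constructor
    · intro hz; exact ⟨z - v.1, by omega, by ring⟩
    · rintro ⟨w, hw, rfl⟩; omega
  rw [himg, Finset.filter_image]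
  rw [Finset.card_image_of_injective _ (fun a b hab => by simpa using hab)]
  congr 1
  apply Finset.filter_congr
  intro z _
  simp only [ne_eq, eq_iff_iff]
  constructor
  · intro hne heq
    apply hne
    have : z + v.1 - 1 = (z - 1) + v.1 := by ring
    rw [this]
    rw [colS_translate_pattern]
    have e1 : z + v.1 - v.1 = z := by ring
    have e2 : z - 1 + v.1 - v.1 = z - 1 := by ring
    rw [e1, e2]
    exact heq
  · intro hne heq
    apply hne
    have h' := colS_translate_pattern (S := S) (v := v) (x := z + v.1) (x' := z + v.1 - 1) |>.1 heq
    have e1 : z + v.1 - v.1 = z := by ring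
    have e2 : z + v.1 - 1 - v.1 = z - 1 := by ring
    rw [e1, e2] at h'
    exact h'

lemma phiR_translate {S : Finset (ℤ × ℤ)} {v : ℤ × ℤ} (h : S.Nonempty) {y : ℤ} :
    phiR (translateSh v S) y = phiR S (y - v.2) := by
  have h1 : phiR (translateSh v S) y = phiC (tr (translateSh v S)) y := by rw [phiC_tr]
  rw [h1, translate_tr, phiC_translate (nonempty_tr h), phiC_tr, Prod.fst_swap]

lemma MC_translate {S : Finset (ℤ × ℤ)} {v : ℤ × ℤ} (h : S.Nonempty) {i : ℕ} :
    MC (translateSh v S) i = MC S i := by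
  unfold MC
  rw [image_fst_translate, Finset.filter_image,
    Finset.card_image_of_injective _ (fun a b hab => by simpa using hab)]
  congr 1
  apply Finset.filter_congr
  intro z _
  rw [phiC_translate h]
  simp

lemma mC_translate {S : Finset (ℤ × ℤ)} {v : ℤ × ℤ} (h : S.Nonempty) :
    mC (translateSh v S) = mC S := by
  unfold mC
  rw [image_fst_translate, Finset.sup_image]
  congr 1
  apply Finset.sup_congr rfl
  intro z _
  show phiC (translateSh v S) (z + v.1) = phiC S z
  rw [phiC_translate h]
  congr 1
  ring

lemma MR_translate {S : Finset (ℤ × ℤ)} {v : ℤ × ℤ} (h : S.Nonempty) {i : ℕ} :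
    MR (translateSh v S) i = MR S i := by
  have h1 : MR (translateSh v S) i = MC (tr (translateSh v S)) i := MC_tr.symm
  rw [h1, translate_tr, MC_translate (nonempty_tr h), MC_tr]

lemma mR_translate {S : Finset (ℤ × ℤ)} {v : ℤ × ℤ} (h : S.Nonempty) :
    mR (translateSh v S) = mR S := by
  have h1 : mR (translateSh v S) = mC (tr (translateSh v S)) := mC_tr.symm
  rw [h1, translate_tr, mC_translate (nonempty_tr h), mC_tr]

lemma Baseline_translate {S : Finset (ℤ × ℤ)} {v : ℤ × ℤ} (h : S.Nonempty) :
    Baseline (translateSh v S) = Baseline S := by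
  rw [Baseline_formula, Baseline_formula]
  ext q
  simp only [Finset.mem_image]
  constructor
  · rintro ⟨p, hp, rfl⟩
    have hp' := mem_translate.1 hp
    refine ⟨_, hp', ?_⟩
    rw [phiC_translate h, phiR_translate h]
  · rintro ⟨p, hp, rfl⟩
    refine ⟨(p.1 + v.1, p.2 + v.2), mem_translate.2 (by simpa using hp), ?_⟩
    rw [phiC_translate h, phiR_translate h]
    simp

/-! ### East RC doubling -/

def fE (D : Finset ℤ) (x : ℤ) : ℤ := x + (wD D x : ℤ)

lemma wD_mono {D : Finset ℤ} {x y : ℤ} (h : x ≤ y) : wD D x ≤ wD D y := by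
  apply Finset.card_le_card
  intro z hz
  simp only [Finset.mem_filter] at *
  constructor
  · exact hz.1
  · have := hz.2
    omega

lemma fE_strictMono {D : Finset ℤ} : StrictMono (fE D) := by
  intro x y hxy
  unfold fE
  have := wD_mono (D := D) hxy.le
  omega

lemma wD_succ {D : Finset ℤ} {x : ℤ} :
    wD D (x + 1) = wD D x + (if x ∈ D then 1 else 0) := by
  unfold wD
  split_ifs with hx
  · have : D.filter (· < x + 1) = insert x (D.filter (· < x)) := by
      ext z
      simp only [Finset.mem_filter, Finset.mem_insert, decide_eq_true_eq]
      constructor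
      · rintro ⟨hz, hlt⟩
        rcases eq_or_lt_of_le (by omega : z ≤ x) with h | h
        · exact Or.inl h
        · exact Or.inr ⟨hz, h⟩
      · rintro (rfl | ⟨hz, hlt⟩)
        · exact ⟨hx, by omega⟩
        · exact ⟨hz, by omega⟩
    rw [this, Finset.card_insert_of_notMem (by simp)]
  · have : D.filter (· < x + 1) = D.filter (· < x) := by
      ext z
      simp only [Finset.mem_filter, decide_eq_true_eq]
      constructor
      · rintro ⟨hz, hlt⟩
        refine ⟨hz, ?_⟩
        rcases eq_or_lt_of_le (by omega : z ≤ x) with h | h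
        · exact absurd (h ▸ hz) hx
        · exact h
      · rintro ⟨hz, hlt⟩
        exact ⟨hz, by omega⟩
    rw [this]
    omega

lemma fE_succ {D : Finset ℤ} {x : ℤ} :
    fE D (x + 1) = fE D x + 1 + (if x ∈ D then 1 else 0) := by
  unfold fE
  rw [wD_succ]
  split_ifs <;> push_cast <;> ring

lemma fE_no_middle {D : Finset ℤ} {d x : ℤ} (hd : d ∈ D) : fE D x ≠ fE D d + 1 := by
  intro h
  have h1 : fE D (d + 1) = fE D d + 2 := by rw [fE_succ]; simp only [hd, if_true]; ring
  have h2 : fE D d < fE D x := by omega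
  have h3 : fE D x < fE D (d + 1) := by omega
  have := fE_strictMono.lt_iff_lt.1 h2
  have := fE_strictMono.lt_iff_lt.1 h3
  omega

lemma mem_RCE {S : Finset (ℤ × ℤ)} {D : Finset ℤ} {p : ℤ × ℤ} :
    p ∈ RCE S D ↔ (∃ q ∈ S, (fE D q.1, q.2) = p) ∨
      (∃ q ∈ S, q.1 ∈ D ∧ (fE D q.1 + 1, q.2) = p) := by
  unfold RCE fE
  simp only [Finset.mem_union, Finset.mem_image, Finset.mem_filter]
  constructor
  · rintro (⟨q, hq, rfl⟩ | ⟨q, ⟨hq, hd⟩, rfl⟩)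
    · exact Or.inl ⟨q, hq, rfl⟩
    · exact Or.inr ⟨q, hq, hd, rfl⟩
  · rintro (⟨q, hq, rfl⟩ | ⟨q, hq, hd, rfl⟩)
    · exact Or.inl ⟨q, hq, rfl⟩
    · exact Or.inr ⟨q, ⟨hq, hd⟩, rfl⟩

lemma memT_base {S : Finset (ℤ × ℤ)} {D : Finset ℤ} {x y : ℤ} (h : (x, y) ∈ S) :
    (fE D x, y) ∈ RCE S D := mem_RCE.2 (Or.inl ⟨(x, y), h, rfl⟩)

lemma memT_copy {S : Finset (ℤ × ℤ)} {D : Finset ℤ} {x y : ℤ} (h : (x, y) ∈ S)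
    (hx : x ∈ D) : (fE D x + 1, y) ∈ RCE S D := mem_RCE.2 (Or.inr ⟨(x, y), h, hx, rfl⟩)

lemma colS_RCE_f {S : Finset (ℤ × ℤ)} {D : Finset ℤ} (x : ℤ) :
    colS (RCE S D) (fE D x) = colS S x := by
  ext y
  rw [mem_colS, mem_colS, mem_RCE]
  constructor
  · rintro (⟨q, hq, hh⟩ | ⟨q, hq, hd, hh⟩)
    · have h1 : fE D q.1 = fE D x := congrArg Prod.fst hh
      have h2 : q.2 = y := congrArg Prod.snd hh
      have := fE_strictMono.injective h1
      rw [← this, ← h2]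
      simpa using hq
    · have h1 : fE D q.1 + 1 = fE D x := congrArg Prod.fst hh
      exact absurd h1.symm (fE_no_middle hd)
  · intro h
    exact Or.inl ⟨(x, y), h, rfl⟩

lemma colS_RCE_copy {S : Finset (ℤ × ℤ)} {D : Finset ℤ} {x : ℤ} (hx : x ∈ D) :
    colS (RCE S D) (fE D x + 1) = colS S x := by
  ext y
  rw [mem_colS, mem_colS, mem_RCE]
  constructor
  · rintro (⟨q, hq, hh⟩ | ⟨q, hq, hd, hh⟩)
    · have h1 : fE D q.1 = fE D x + 1 := congrArg Prod.fst hh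
      exact absurd h1 (fE_no_middle hx)
    · have h1 : fE D q.1 + 1 = fE D x + 1 := congrArg Prod.fst hh
      have h2 : q.2 = y := congrArg Prod.snd hh
      have := fE_strictMono.injective (by omega : fE D q.1 = fE D x)
      rw [← this, ← h2]
      simpa using hq
  · intro h
    exact Or.inr ⟨(x, y), h, hx, rfl⟩

section East

variable {S : Finset (ℤ × ℤ)} {D : Finset ℤ}
  (hS : S.Nonempty) (hD : ∀ d ∈ D, d ∈ S.image Prod.fst)

include hD

lemma wD_xmin (hS : S.Nonempty) : wD D (xmin S) = 0 := by
  unfold wD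
  rw [Finset.card_eq_zero, Finset.filter_eq_empty_iff]
  intro d hd
  obtain ⟨p, hp, rfl⟩ := Finset.mem_image.1 (hD d hd)
  have := xmin_le hp
  omega

lemma fE_xmin (hS : S.Nonempty) : fE D (xmin S) = xmin S := by
  unfold fE
  rw [wD_xmin hD hS]
  norm_num

lemma xmin_RCE (hS : S.Nonempty) : xmin (RCE S D) = xmin S := by
  obtain ⟨p, hp, hpx⟩ := exists_xmin hS
  have h1 : (fE D p.1, p.2) ∈ RCE S D := memT_base (by rwa [Prod.mk.eta])
  apply le_antisymm
  · have := xmin_le h1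
    rw [hpx] at this
    rw [fE_xmin hD hS] at this
    simpa using this
  · have hTne : (RCE S D).Nonempty := ⟨_, h1⟩
    obtain ⟨q, hq, hqx⟩ := exists_xmin hTne
    rw [← hqx]
    rcases mem_RCE.1 hq with ⟨a, ha, hh⟩ | ⟨a, ha, hd, hh⟩
    · have h2 : fE D a.1 = q.1 := congrArg Prod.fst hh
      have := xmin_le ha
      unfold fE at h2
      omega
    · have h2 : fE D a.1 + 1 = q.1 := congrArg Prod.fst hh
      have := xmin_le ha
      unfold fE at h2
      omega

lemma phiC_RCE_f (hS : S.Nonempty) :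
    ∀ x, xmin S ≤ x → phiC (RCE S D) (fE D x) = phiC S x := by
  intro x hx
  refine Int.le_induction (motive := fun x _ => phiC (RCE S D) (fE D x) = phiC S x) ?_ ?_ x hx
  · show phiC (RCE S D) (fE D (xmin S)) = phiC S (xmin S)
    rw [fE_xmin hD hS, phiC_of_le (S := RCE S D) (le_of_eq (xmin_RCE hD hS).symm),
      phiC_of_le le_rfl]
  · intro z hz ih
    have hxT : xmin (RCE S D) = xmin S := xmin_RCE hD hS
    have hfz : xmin (RCE S D) ≤ fE D z := by rw [hxT]; unfold fE; omega
    have c0 : colS (RCE S D) (fE D z) = colS S z := colS_RCE_f z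
    have hSstep : phiC S (z + 1) =
        phiC S z + (if colS S (z + 1) = colS S z then 0 else 1) := phiC_succ hz
    by_cases hzD : z ∈ D
    · have e1 : fE D (z + 1) = fE D z + 2 := by rw [fE_succ, if_pos hzD]; ring
      have c1 : colS (RCE S D) (fE D z + 1) = colS S z := colS_RCE_copy hzD
      have c2 : colS (RCE S D) (fE D z + 2) = colS S (z + 1) := by
        have h := colS_RCE_f (S := S) (D := D) (z + 1)
        rw [e1] at h; exact h
      have s1 : phiC (RCE S D) (fE D z + 1) = phiC (RCE S D) (fE D z) := by
        rw [phiC_succ hfz, c1, c0]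
        simp
      have s2 := phiC_succ (S := RCE S D) (x := fE D z + 1) (by omega)
      have e2 : fE D z + 1 + 1 = fE D z + 2 := by ring
      rw [e2, c2, c1] at s2
      rw [e1, s2, s1, ih, hSstep]
    · have e1 : fE D (z + 1) = fE D z + 1 := by rw [fE_succ, if_neg hzD]; ring
      have c2 : colS (RCE S D) (fE D z + 1) = colS S (z + 1) := by
        have h := colS_RCE_f (S := S) (D := D) (z + 1)
        rw [e1] at h; exact h
      have s1 := phiC_succ (S := RCE S D) (x := fE D z) hfz
      rw [c2, c0] at s1
      rw [e1, s1, ih, hSstep]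

lemma phiC_RCE_copy (hS : S.Nonempty) {x : ℤ} (hx : xmin S ≤ x) (hxD : x ∈ D) :
    phiC (RCE S D) (fE D x + 1) = phiC S x := by
  have hxT := xmin_RCE hD hS
  have hfz : xmin (RCE S D) ≤ fE D x := by rw [hxT]; unfold fE; omega
  rw [phiC_succ hfz, colS_RCE_copy hxD, colS_RCE_f, phiC_RCE_f hD hS x hx]
  simp

end East

lemma image_fst_RCE {S : Finset (ℤ × ℤ)} {D : Finset ℤ}
    (hD : ∀ d ∈ D, d ∈ S.image Prod.fst) :
    (RCE S D).image Prod.fst =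
      ((S.image Prod.fst).image (fE D)) ∪ (D.image (fun d => fE D d + 1)) := by
  ext z
  simp only [Finset.mem_union, Finset.mem_image]
  constructor
  · rintro ⟨p, hp, rfl⟩
    rcases mem_RCE.1 hp with ⟨q, hq, hh⟩ | ⟨q, hq, hd, hh⟩
    · exact Or.inl ⟨q.1, ⟨q, hq, rfl⟩, congrArg Prod.fst hh⟩
    · exact Or.inr ⟨q.1, hd, congrArg Prod.fst hh⟩
  · rintro (⟨x, ⟨p, hp, rfl⟩, rfl⟩ | ⟨d, hd, rfl⟩)
    · exact ⟨(fE D p.1, p.2), memT_base (by rwa [Prod.mk.eta]), rfl⟩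
    · obtain ⟨p, hp, rfl⟩ := Finset.mem_image.1 (hD d hd)
      exact ⟨(fE D p.1 + 1, p.2), memT_copy (by rwa [Prod.mk.eta]) hd, rfl⟩

section East2

variable {S : Finset (ℤ × ℤ)} {D : Finset ℤ}

lemma KC_RCE (hS : S.Nonempty) (hD : ∀ d ∈ D, d ∈ S.image Prod.fst) :
    KC (RCE S D) = KC S := by
  ext q
  rw [mem_KC, mem_KC]
  constructor
  · rintro ⟨p, hp, rfl⟩
    rcases mem_RCE.1 hp with ⟨a, ha, rfl⟩ | ⟨a, ha, hd, rfl⟩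
    · refine ⟨a, ha, ?_⟩
      show ((phiC S a.1 : ℤ), a.2) = ((phiC (RCE S D) (fE D a.1) : ℤ), a.2)
      rw [phiC_RCE_f hD hS a.1 (xmin_le ha)]
    · refine ⟨a, ha, ?_⟩
      show ((phiC S a.1 : ℤ), a.2) = ((phiC (RCE S D) (fE D a.1 + 1) : ℤ), a.2)
      rw [phiC_RCE_copy hD hS (xmin_le ha) hd]
  · rintro ⟨p, hp, rfl⟩
    refine ⟨(fE D p.1, p.2), memT_base (by rwa [Prod.mk.eta]), ?_⟩
    show ((phiC (RCE S D) (fE D p.1) : ℤ), p.2) = _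
    rw [phiC_RCE_f hD hS p.1 (xmin_le hp)]

lemma Baseline_RCE (hS : S.Nonempty) (hD : ∀ d ∈ D, d ∈ S.image Prod.fst) :
    Baseline (RCE S D) = Baseline S := by
  unfold Baseline
  rw [KC_RCE hS hD]

lemma image_snd_RCE : (RCE S D).image Prod.snd = S.image Prod.snd := by
  ext z
  simp only [Finset.mem_image]
  constructor
  · rintro ⟨p, hp, rfl⟩
    rcases mem_RCE.1 hp with ⟨q, hq, hh⟩ | ⟨q, hq, hd, hh⟩
    · have h2 := congrArg Prod.snd hh
      exact ⟨q, hq, h2⟩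
    · have h2 := congrArg Prod.snd hh
      exact ⟨q, hq, h2⟩
  · rintro ⟨p, hp, rfl⟩
    exact ⟨(fE D p.1, p.2), memT_base (by rwa [Prod.mk.eta]), rfl⟩

lemma mem_rowS_RCE {x y : ℤ} : x ∈ rowS S y ↔ fE D x ∈ rowS (RCE S D) y := by
  rw [mem_rowS, mem_rowS]
  constructor
  · intro h; exact memT_base h
  · intro h
    rcases mem_RCE.1 h with ⟨q, hq, hh⟩ | ⟨q, hq, hd, hh⟩
    · have h1 : fE D q.1 = fE D x := congrArg Prod.fst hh
      have h2 : q.2 = y := congrArg Prod.snd hh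
      have := fE_strictMono.injective h1
      rw [← this, ← h2]; rwa [Prod.mk.eta]
    · have h1 : fE D q.1 + 1 = fE D x := congrArg Prod.fst hh
      exact absurd h1.symm (fE_no_middle hd)

lemma mem_rowS_RCE' {z y : ℤ} :
    z ∈ rowS (RCE S D) y ↔ (∃ x, x ∈ rowS S y ∧ fE D x = z) ∨
      (∃ x, x ∈ rowS S y ∧ x ∈ D ∧ fE D x + 1 = z) := by
  rw [mem_rowS]
  constructor
  · intro h
    rcases mem_RCE.1 h with ⟨q, hq, hh⟩ | ⟨q, hq, hd, hh⟩
    · have h2 : q.2 = y := congrArg Prod.snd hh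
      have h1 : fE D q.1 = z := congrArg Prod.fst hh
      exact Or.inl ⟨q.1, mem_rowS.2 (by rw [← h2]; rwa [Prod.mk.eta]), h1⟩
    · have h2 : q.2 = y := congrArg Prod.snd hh
      have h1 : fE D q.1 + 1 = z := congrArg Prod.fst hh
      exact Or.inr ⟨q.1, mem_rowS.2 (by rw [← h2]; rwa [Prod.mk.eta]), hd, h1⟩
  · rintro (⟨x, hx, rfl⟩ | ⟨x, hx, hd, rfl⟩)
    · exact memT_base (mem_rowS.1 hx)
    · exact memT_copy (mem_rowS.1 hx) hd

lemma rowS_RCE_eq_iff {y y' : ℤ} :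
    rowS (RCE S D) y = rowS (RCE S D) y' ↔ rowS S y = rowS S y' := by
  constructor
  · intro h
    ext x
    rw [mem_rowS_RCE (D := D), h, ← mem_rowS_RCE]
  · intro h
    ext z
    rw [mem_rowS_RCE', mem_rowS_RCE', h]

lemma phiR_RCE : phiR (RCE S D) = phiR S := by
  funext y
  unfold phiR
  rw [ymin_congr (image_snd_RCE (S := S) (D := D))]
  congr 1
  apply Finset.filter_congr
  intro z _
  simp only [ne_eq, eq_iff_iff]
  rw [rowS_RCE_eq_iff]

lemma MR_RCE {i : ℕ} : MR (RCE S D) i = MR S i := by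
  unfold MR; rw [image_snd_RCE, phiR_RCE]

lemma mR_RCE : mR (RCE S D) = mR S := by
  unfold mR; rw [image_snd_RCE, phiR_RCE]

lemma xmin_le_of_mem_fst {x : ℤ} (hx : x ∈ S.image Prod.fst) : xmin S ≤ x := by
  obtain ⟨p, hp, rfl⟩ := Finset.mem_image.1 hx
  exact xmin_le hp

lemma mC_RCE (hS : S.Nonempty) (hD : ∀ d ∈ D, d ∈ S.image Prod.fst) :
    mC (RCE S D) = mC S := by
  unfold mC
  congr 1
  apply le_antisymm
  · apply Finset.sup_le
    intro z hz
    rw [image_fst_RCE hD] at hz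
    rcases Finset.mem_union.1 hz with hz | hz
    · obtain ⟨x, hx, rfl⟩ := Finset.mem_image.1 hz
      rw [phiC_RCE_f hD hS x (xmin_le_of_mem_fst hx)]
      exact Finset.le_sup hx
    · obtain ⟨d, hd, rfl⟩ := Finset.mem_image.1 hz
      rw [phiC_RCE_copy hD hS (xmin_le_of_mem_fst (hD d hd)) hd]
      exact Finset.le_sup (hD d hd)
  · apply Finset.sup_le
    intro z hz
    have hmem : fE D z ∈ (RCE S D).image Prod.fst := by
      rw [image_fst_RCE hD]
      exact Finset.mem_union_left _ (Finset.mem_image_of_mem _ hz)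
    calc phiC S z = phiC (RCE S D) (fE D z) :=
          (phiC_RCE_f hD hS z (xmin_le_of_mem_fst hz)).symm
      _ ≤ _ := Finset.le_sup hmem

lemma MC_RCE (hS : S.Nonempty) (hD : ∀ d ∈ D, d ∈ S.image Prod.fst) {i : ℕ} :
    MC (RCE S D) i = MC S i + (D.filter fun d => phiC S d = i).card := by
  unfold MC
  rw [image_fst_RCE hD, Finset.filter_union]
  rw [Finset.card_union_of_disjoint]
  · congr 1
    · rw [Finset.filter_image, Finset.card_image_of_injective _ fE_strictMono.injective]
      congr 1
      apply Finset.filter_congr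
      intro x hx
      rw [phiC_RCE_f hD hS x (xmin_le_of_mem_fst hx)]
    · rw [Finset.filter_image, Finset.card_image_of_injective _
        (fun a b hab => fE_strictMono.injective (by omega : fE D a = fE D b))]
      congr 1
      apply Finset.filter_congr
      intro d hd
      rw [phiC_RCE_copy hD hS (xmin_le_of_mem_fst (hD d hd)) hd]
  · rw [Finset.disjoint_left]
    intro z hz1 hz2
    obtain ⟨x, hx, rfl⟩ := Finset.mem_image.1 (Finset.mem_of_mem_filter _ hz1)
    obtain ⟨d, hd, hh⟩ := Finset.mem_image.1 (Finset.mem_of_mem_filter _ hz2)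
    exact fE_no_middle hd hh.symm

lemma nonempty_RCE (hS : S.Nonempty) : (RCE S D).Nonempty := by
  obtain ⟨p, hp⟩ := hS
  exact ⟨(fE D p.1, p.2), memT_base (by rwa [Prod.mk.eta])⟩

lemma connected_RCE (hc : ShapeConnected S) : ShapeConnected (RCE S D) := by
  classical
  set T := RCE S D with hT
  set R := fun a b : ℤ × ℤ => a ∈ T ∧ b ∈ T ∧ Adj a b with hR
  have hsym : Symmetric R := fun a b h => ⟨h.2.1, h.1, adj_symm h.2.2⟩
  have hsymRT : ∀ {a b}, Relation.ReflTransGen R a b → Relation.ReflTransGen R b a :=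
    fun h => Relation.ReflTransGen.mono (fun x y hxy => hsym hxy) _ _ h.swap
  have key : ∀ a b : ℤ × ℤ, a ∈ S → b ∈ S → b.1 = a.1 + 1 → b.2 = a.2 →
      Relation.ReflTransGen R (fE D a.1, a.2) (fE D b.1, b.2) := by
    intro a b ha hb he hy
    have m1 : (fE D a.1, a.2) ∈ T := memT_base (by rwa [Prod.mk.eta])
    have m3 : (fE D b.1, b.2) ∈ T := memT_base (by rwa [Prod.mk.eta])
    by_cases haD : a.1 ∈ D
    · have m2 : (fE D a.1 + 1, a.2) ∈ T := memT_copy (by rwa [Prod.mk.eta]) haD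
      have e1 : fE D b.1 = fE D a.1 + 2 := by rw [he, fE_succ, if_pos haD]; ring
      refine Relation.ReflTransGen.head ⟨m1, m2, ?_⟩
        (Relation.ReflTransGen.single ⟨m2, m3, ?_⟩)
      · show (fE D a.1 - (fE D a.1 + 1)).natAbs + (a.2 - a.2).natAbs = 1
        omega
      · show (fE D a.1 + 1 - fE D b.1).natAbs + (a.2 - b.2).natAbs = 1
        omega
    · have e1 : fE D b.1 = fE D a.1 + 1 := by rw [he, fE_succ, if_neg haD]; ring
      refine Relation.ReflTransGen.single ⟨m1, m3, ?_⟩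
      show (fE D a.1 - fE D b.1).natAbs + (a.2 - b.2).natAbs = 1
      omega
  have hbase : ∀ p q : ℤ × ℤ, p ∈ S → q ∈ S → Adj p q →
      Relation.ReflTransGen R (fE D p.1, p.2) (fE D q.1, q.2) := by
    intro p q hp hq hadj
    have m1 : (fE D p.1, p.2) ∈ T := memT_base (by rwa [Prod.mk.eta])
    have m2 : (fE D q.1, q.2) ∈ T := memT_base (by rwa [Prod.mk.eta])
    rcases adj_cases hadj with ⟨h1, h2⟩ | ⟨h1, h2⟩
    · refine Relation.ReflTransGen.single ⟨m1, m2, ?_⟩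
      show (fE D p.1 - fE D q.1).natAbs + (p.2 - q.2).natAbs = 1
      rw [h1]
      omega
    · rcases h2 with h2 | h2
      · exact hsymRT (key q p hq hp (by omega) (by omega))
      · exact key p q hp hq (by omega) (by omega)
  have hlift : ∀ a b : ℤ × ℤ,
      Relation.ReflTransGen (fun a b => a ∈ S ∧ b ∈ S ∧ Adj a b) a b →
      Relation.ReflTransGen R (fE D a.1, a.2) (fE D b.1, b.2) := by
    intro a b h
    induction h with
    | refl => exact Relation.ReflTransGen.refl
    | tail hab hbc ih => exact ih.trans (hbase _ _ hbc.1 hbc.2.1 hbc.2.2)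
  have reduce : ∀ w, w ∈ T → ∃ q, q ∈ S ∧
      Relation.ReflTransGen R w (fE D q.1, q.2) := by
    intro w hw
    rcases mem_RCE.1 hw with ⟨q, hq, hh⟩ | ⟨q, hq, hd, hh⟩
    · exact ⟨q, hq, by rw [← hh]⟩
    · refine ⟨q, hq, ?_⟩
      have m1 : (fE D q.1, q.2) ∈ T := memT_base (by rwa [Prod.mk.eta])
      rw [← hh]
      refine Relation.ReflTransGen.single ⟨?_, m1, ?_⟩
      · rw [hh]; exact hw
      · show (fE D q.1 + 1 - fE D q.1).natAbs + (q.2 - q.2).natAbs = 1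
        omega
  intro u hu v hv
  obtain ⟨qu, hqu, hpu⟩ := reduce u hu
  obtain ⟨qv, hqv, hpv⟩ := reduce v hv
  exact (hpu.trans (hlift _ _ (hc _ hqu _ hqv))).trans (hsymRT hpv)

end East2

/-! ### Fibers and cumulative multiplicities -/

def xmaxS (S : Finset (ℤ × ℤ)) : ℤ := WithBot.unbotD 0 ((S.image Prod.fst).max)

lemma le_xmax {S : Finset (ℤ × ℤ)} {p : ℤ × ℤ} (hp : p ∈ S) : p.1 ≤ xmaxS S := by
  have h1 : p.1 ∈ S.image Prod.fst := Finset.mem_image_of_mem _ hp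
  have h2 := Finset.le_max h1
  unfold xmaxS
  rcases hmax : (S.image Prod.fst).max with _ | a
  · have he := Finset.max_eq_bot.mp hmax
    simp [he] at h1
  · rw [hmax] at h2
    show _ ≤ a
    exact WithBot.coe_le_coe.1 h2

lemma exists_xmax {S : Finset (ℤ × ℤ)} (h : S.Nonempty) : ∃ p ∈ S, p.1 = xmaxS S := by
  obtain ⟨a, ha, hmax⟩ := Finset.exists_max_image S Prod.fst h
  refine ⟨a, ha, le_antisymm (le_xmax ha) ?_⟩
  unfold xmaxS
  rcases hm : (S.image Prod.fst).max with _ | b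
  · have he := Finset.max_eq_bot.mp hm
    have h' : (S.image Prod.fst).Nonempty := h.image _
    simp [he] at h'
  · have hb : b ∈ S.image Prod.fst := Finset.mem_of_max hm
    obtain ⟨q, hq, rfl⟩ := Finset.mem_image.1 hb
    show q.1 ≤ a.1
    exact hmax q hq

lemma image_fst_eq_Icc {S : Finset (ℤ × ℤ)} (hc : ShapeConnected S) (hS : S.Nonempty) :
    S.image Prod.fst = Finset.Icc (xmin S) (xmaxS S) := by
  ext x
  constructor
  · intro hx
    obtain ⟨p, hp, rfl⟩ := Finset.mem_image.1 hx
    exact Finset.mem_Icc.2 ⟨xmin_le hp, le_xmax hp⟩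
  · intro hx
    obtain ⟨p, hp, hpx⟩ := exists_xmin hS
    obtain ⟨q, hq, hqx⟩ := exists_xmax hS
    rw [Finset.mem_Icc] at hx
    exact mem_fst_between' hc (Finset.mem_image_of_mem _ hp)
      (Finset.mem_image_of_mem _ hq) (by omega) (by omega)

lemma col_empty {S : Finset (ℤ × ℤ)} {x : ℤ} (hx : x ∉ S.image Prod.fst) :
    colS S x = ∅ := by
  rw [Finset.eq_empty_iff_forall_notMem]
  intro y hy
  exact hx (Finset.mem_image_of_mem _ (mem_colS.1 hy))

lemma phiC_lt_mC {S : Finset (ℤ × ℤ)} {x : ℤ} (hx : x ∈ S.image Prod.fst) :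
    phiC S x < mC S := by
  unfold mC
  have := Finset.le_sup (f := phiC S) hx
  omega

lemma MC_eq_zero_of_ge {S : Finset (ℤ × ℤ)} {i : ℕ} (h : mC S ≤ i) : MC S i = 0 := by
  unfold MC
  rw [Finset.card_eq_zero, Finset.filter_eq_empty_iff]
  intro x hx
  have := phiC_lt_mC hx
  omega

lemma MR_eq_zero_of_ge {S : Finset (ℤ × ℤ)} {i : ℕ} (h : mR S ≤ i) : MR S i = 0 := by
  have h1 : MR S i = MC (tr S) i := MC_tr.symm
  rw [h1]
  exact MC_eq_zero_of_ge (by rwa [mC_tr])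

lemma MC_pos {S : Finset (ℤ × ℤ)} (hc : ShapeConnected S) (hS : S.Nonempty) {i : ℕ}
    (h : i < mC S) : 0 < MC S i := by
  obtain ⟨x, hx, hsup⟩ := Finset.exists_mem_eq_sup _ (hS.image Prod.fst) (phiC S)
  have hi : i ≤ phiC S x := by unfold mC at h; omega
  obtain ⟨z, hz1, hz2, hz3⟩ := phiC_ivt (xmin_le_of_mem_fst hx) i hi
  obtain ⟨p, hp, hpx⟩ := exists_xmin hS
  have hzmem : z ∈ S.image Prod.fst :=
    mem_fst_between' hc (by rw [← hpx] at hz1 ⊢; exact Finset.mem_image_of_mem _ hp) hx hz1 hz2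
  unfold MC
  rw [Finset.card_pos]
  exact ⟨z, Finset.mem_filter.2 ⟨hzmem, hz3⟩⟩

lemma exists_phiC_eq {S : Finset (ℤ × ℤ)} (hc : ShapeConnected S) (hS : S.Nonempty) {i : ℕ}
    (h : i < mC S) : ∃ x ∈ S.image Prod.fst, phiC S x = i := by
  have := MC_pos hc hS h
  unfold MC at this
  rw [Finset.card_pos] at this
  obtain ⟨x, hx⟩ := this
  rw [Finset.mem_filter] at hx
  exact ⟨x, hx.1, hx.2⟩

lemma lt_mC_iff {S : Finset (ℤ × ℤ)} (hc : ShapeConnected S) (hS : S.Nonempty) {i : ℕ} :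
    i < mC S ↔ MC S i ≠ 0 := by
  constructor
  · intro h; exact (MC_pos hc hS h).ne'
  · intro h
    by_contra hlt
    exact h (MC_eq_zero_of_ge (by omega))

lemma mC_eq_of_MC {S T : Finset (ℤ × ℤ)} (hcS : ShapeConnected S) (hS : S.Nonempty)
    (hcT : ShapeConnected T) (hT : T.Nonempty) (h : ∀ i, MC S i = MC T i) :
    mC S = mC T := by
  have h1 : ∀ i, i < mC S ↔ i < mC T := by
    intro i
    rw [lt_mC_iff hcS hS, lt_mC_iff hcT hT, h i]
  rcases lt_trichotomy (mC S) (mC T) with hlt | heq | hgt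
  · exact absurd ((h1 (mC S)).2 hlt) (lt_irrefl _)
  · exact heq
  · exact absurd ((h1 (mC T)).1 hgt) (lt_irrefl _)

noncomputable def AC (S : Finset (ℤ × ℤ)) (i : ℕ) : ℕ := ∑ j ∈ Finset.range i, MC S j

lemma AC_mono {S : Finset (ℤ × ℤ)} {i j : ℕ} (h : i ≤ j) : AC S i ≤ AC S j := by
  unfold AC
  exact Finset.sum_le_sum_of_subset (Finset.range_subset_range.2 h)

lemma card_filter_lt {S : Finset (ℤ × ℤ)} {i : ℕ} :
    ((S.image Prod.fst).filter fun z => phiC S z < i).card = AC S i := by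
  induction i with
  | zero => simp [AC]
  | succ n ih =>
      have hsplit : (S.image Prod.fst).filter (fun z => phiC S z < n + 1) =
          ((S.image Prod.fst).filter fun z => phiC S z < n) ∪
          ((S.image Prod.fst).filter fun z => phiC S z = n) := by
        rw [← Finset.filter_or]
        apply Finset.filter_congr
        intro z _
        constructor
        · intro h; omega
        · intro h; omega
      rw [hsplit, Finset.card_union_of_disjoint, ih]
      · unfold AC
        rw [Finset.sum_range_succ]
        rfl
      · rw [Finset.disjoint_left]
        intro z hz1 hz2
        rw [Finset.mem_filter] at hz1 hz2
        omega

lemma phiC_det {S : Finset (ℤ × ℤ)} (hc : ShapeConnected S) (hS : S.Nonempty) {x : ℤ}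
    (hx : x ∈ S.image Prod.fst) :
    AC S (phiC S x) ≤ (Finset.Icc (xmin S) (x - 1)).card ∧
      (Finset.Icc (xmin S) (x - 1)).card < AC S (phiC S x + 1) := by
  set i := phiC S x with hi
  have hIcc : Finset.Icc (xmin S) (x - 1) =
      ((S.image Prod.fst).filter fun z => phiC S z < i) ∪
      ((S.image Prod.fst).filter fun z => phiC S z = i ∧ z < x) := by
    ext z
    simp only [Finset.mem_Icc, Finset.mem_union, Finset.mem_filter]
    constructor
    · intro hz
      have hzmem : z ∈ S.image Prod.fst := by
        rw [image_fst_eq_Icc hc hS]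
        rw [image_fst_eq_Icc hc hS, Finset.mem_Icc] at hx
        exact Finset.mem_Icc.2 ⟨by omega, by omega⟩
      have hle : phiC S z ≤ i := phiC_mono (by omega)
      rcases Nat.lt_or_ge (phiC S z) i with hlt | hge
      · exact Or.inl ⟨hzmem, hlt⟩
      · exact Or.inr ⟨hzmem, by omega, by omega⟩
    · rintro (⟨hzmem, hlt⟩ | ⟨hzmem, heq, hlt⟩)
      · have h1 : xmin S ≤ z := xmin_le_of_mem_fst hzmem
        have h2 : z < x := by
          by_contra hcon
          have := phiC_mono (S := S) (show x ≤ z by omega)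
          omega
        omega
      · exact ⟨xmin_le_of_mem_fst hzmem, by omega⟩
  have hdisj : Disjoint ((S.image Prod.fst).filter fun z => phiC S z < i)
      ((S.image Prod.fst).filter fun z => phiC S z = i ∧ z < x) := by
    rw [Finset.disjoint_left]
    intro z hz1 hz2
    rw [Finset.mem_filter] at hz1 hz2
    omega
  have hcard : (Finset.Icc (xmin S) (x - 1)).card =
      AC S i + ((S.image Prod.fst).filter fun z => phiC S z = i ∧ z < x).card := by
    rw [hIcc, Finset.card_union_of_disjoint hdisj, card_filter_lt]
  have hlt2 : ((S.image Prod.fst).filter fun z => phiC S z = i ∧ z < x).card < MC S i := by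
    apply Finset.card_lt_card
    rw [Finset.ssubset_iff_of_subset]
    · exact ⟨x, Finset.mem_filter.2 ⟨hx, hi.symm⟩, by
        intro hcon
        rw [Finset.mem_filter] at hcon
        omega⟩
    · intro z hz
      rw [Finset.mem_filter] at hz
      exact Finset.mem_filter.2 ⟨hz.1, hz.2.1⟩
  constructor
  · omega
  · have : AC S (i + 1) = AC S i + MC S i := by
      unfold AC
      rw [Finset.sum_range_succ]
    omega

/-! ### Uniqueness of shapes with given compression and multiplicities -/

lemma phiC_match {S T : Finset (ℤ × ℤ)} (hcS : ShapeConnected S) (hS : S.Nonempty)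
    (hcT : ShapeConnected T) (hT : T.Nonempty) (hMC : ∀ i, MC S i = MC T i)
    {x y : ℤ} (hx : x ∈ S.image Prod.fst) (hy : y ∈ T.image Prod.fst)
    (ht : x - xmin S = y - xmin T) : phiC S x = phiC T y := by
  have hAC : ∀ i, AC S i = AC T i := by
    intro i
    unfold AC
    exact Finset.sum_congr rfl fun j _ => hMC j
  have hdS := phiC_det hcS hS hx
  have hdT := phiC_det hcT hT hy
  have hcards : (Finset.Icc (xmin S) (x - 1)).card = (Finset.Icc (xmin T) (y - 1)).card := by
    rw [Int.card_Icc, Int.card_Icc]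
    congr 1
    omega
  rw [hcards] at hdS
  rw [hAC, hAC] at hdS
  rcases lt_trichotomy (phiC S x) (phiC T y) with hlt | heq | hgt
  · have := AC_mono (S := T) (show phiC S x + 1 ≤ phiC T y by omega)
    omega
  · exact heq
  · have := AC_mono (S := T) (show phiC T y + 1 ≤ phiC S x by omega)
    omega

lemma colS_KC {S : Finset (ℤ × ℤ)} {x : ℤ} (hx : x ∈ S.image Prod.fst) :
    colS (KC S) ((phiC S x : ℤ)) = colS S x := by
  ext y
  rw [mem_colS, mem_colS, mem_KC]
  constructor
  · rintro ⟨p, hp, hh⟩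
    have h1 : (phiC S p.1 : ℤ) = (phiC S x : ℤ) := congrArg Prod.fst hh
    have h2 : p.2 = y := congrArg Prod.snd hh
    have h1' : phiC S p.1 = phiC S x := by exact_mod_cast h1
    have hcol : colS S p.1 = colS S x := by
      rcases le_total p.1 x with hle | hle
      · exact colS_eq_of_phiC_eq (xmin_le hp) hle h1'
      · exact (colS_eq_of_phiC_eq (xmin_le_of_mem_fst hx) hle h1'.symm).symm
    have : y ∈ colS S p.1 := mem_colS.2 (by rw [← h2]; rwa [Prod.mk.eta])
    rw [hcol] at this
    exact mem_colS.1 this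
  · intro h
    exact ⟨(x, y), h, rfl⟩

lemma card_image_fst_eq {S T : Finset (ℤ × ℤ)} (hcS : ShapeConnected S) (hS : S.Nonempty)
    (hcT : ShapeConnected T) (hT : T.Nonempty) (hMC : ∀ i, MC S i = MC T i) :
    (S.image Prod.fst).card = (T.image Prod.fst).card := by
  have hmc := mC_eq_of_MC hcS hS hcT hT hMC
  have hsum : ∀ (U : Finset (ℤ × ℤ)), (U.image Prod.fst).card =
      ∑ i ∈ Finset.range (mC U), MC U i := by
    intro U
    exact Finset.card_eq_sum_card_fiberwise
      (fun x hx => Finset.mem_range.2 (phiC_lt_mC hx))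
  rw [hsum S, hsum T, hmc]
  exact Finset.sum_congr rfl fun j _ => hMC j

lemma xmax_span {S : Finset (ℤ × ℤ)} (hc : ShapeConnected S) (hS : S.Nonempty) :
    xmaxS S = xmin S + ((S.image Prod.fst).card : ℤ) - 1 := by
  have h1 := image_fst_eq_Icc hc hS
  obtain ⟨p, hp, hpx⟩ := exists_xmin hS
  obtain ⟨q, hq, hqx⟩ := exists_xmax hS
  have hle : xmin S ≤ xmaxS S := by
    have := xmin_le hq
    omega
  have : (S.image Prod.fst).card = (xmaxS S + 1 - xmin S).toNat := by
    rw [h1, Int.card_Icc]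
  omega

lemma eq_translate_of_KC_eq {S T : Finset (ℤ × ℤ)} (hcS : ShapeConnected S)
    (hS : S.Nonempty) (hcT : ShapeConnected T) (hT : T.Nonempty)
    (hKC : KC S = KC T) (hMC : ∀ i, MC S i = MC T i) :
    T = translateSh (xmin T - xmin S, 0) S := by
  have hcard := card_image_fst_eq hcS hS hcT hT hMC
  have hspanS := xmax_span hcS hS
  have hspanT := xmax_span hcT hT
  have hmemiff : ∀ x : ℤ, x ∈ T.image Prod.fst ↔
      x - (xmin T - xmin S) ∈ S.image Prod.fst := by
    intro x
    rw [image_fst_eq_Icc hcS hS, image_fst_eq_Icc hcT hT, Finset.mem_Icc, Finset.mem_Icc]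
    omega
  have key : ∀ x : ℤ, colS T x = colS S (x - (xmin T - xmin S)) := by
    intro x
    by_cases hx : x ∈ T.image Prod.fst
    · have hx' : x - (xmin T - xmin S) ∈ S.image Prod.fst := (hmemiff x).1 hx
      have hphi : phiC S (x - (xmin T - xmin S)) = phiC T x :=
        phiC_match hcS hS hcT hT hMC hx' hx (by omega)
      calc colS T x = colS (KC T) ((phiC T x : ℤ)) := (colS_KC hx).symm
        _ = colS (KC S) ((phiC S (x - (xmin T - xmin S)) : ℤ)) := by rw [hKC, hphi]
        _ = colS S (x - (xmin T - xmin S)) := colS_KC hx'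
    · rw [col_empty hx, col_empty (fun hcon => hx ((hmemiff x).2 hcon))]
  ext p
  rw [mem_translate]
  have h1 : p ∈ T ↔ p.2 ∈ colS T p.1 := mem_colS.symm
  rw [h1, key]
  show _ ↔ (p.1 - (xmin T - xmin S, (0:ℤ)).1, p.2 - (xmin T - xmin S, (0:ℤ)).2) ∈ S
  rw [show p.2 - (xmin T - xmin S, (0:ℤ)).2 = p.2 by simp]
  exact mem_colS

lemma connected_KC {S : Finset (ℤ × ℤ)} (hc : ShapeConnected S) : ShapeConnected (KC S) := by
  set R := fun a b : ℤ × ℤ => a ∈ KC S ∧ b ∈ KC S ∧ Adj a b with hR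
  have himg : ∀ p : ℤ × ℤ, p ∈ S → ((phiC S p.1 : ℤ), p.2) ∈ KC S := by
    intro p hp
    exact mem_KC.2 ⟨p, hp, rfl⟩
  have hbase : ∀ p q : ℤ × ℤ, p ∈ S → q ∈ S → Adj p q →
      Relation.ReflTransGen R ((phiC S p.1 : ℤ), p.2) ((phiC S q.1 : ℤ), q.2) := by
    intro p q hp hq hadj
    rcases adj_cases hadj with ⟨h1, h2⟩ | ⟨h1, h2⟩
    · refine Relation.ReflTransGen.single ⟨himg p hp, himg q hq, ?_⟩
      show ((phiC S p.1 : ℤ) - (phiC S q.1 : ℤ)).natAbs + (p.2 - q.2).natAbs = 1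
      rw [h1]
      omega
    · have hkey : ∀ a b : ℤ × ℤ, a ∈ S → b ∈ S → b.1 = a.1 + 1 → b.2 = a.2 →
          Relation.ReflTransGen R ((phiC S a.1 : ℤ), a.2) ((phiC S b.1 : ℤ), b.2) := by
        intro a b ha hb he hy
        have hstep : phiC S b.1 = phiC S a.1 ∨ phiC S b.1 = phiC S a.1 + 1 := by
          have h3 := phiC_succ (S := S) (x := a.1) (xmin_le ha)
          rw [← he] at h3
          split_ifs at h3 <;> omega
        rcases hstep with hcase | hcase
        · rw [hcase, hy]
        · refine Relation.ReflTransGen.single ⟨himg a ha, himg b hb, ?_⟩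
          show ((phiC S a.1 : ℤ) - (phiC S b.1 : ℤ)).natAbs + (a.2 - b.2).natAbs = 1
          rw [hcase, hy]
          push_cast
          omega
      have hsym : Symmetric R := fun a b h => ⟨h.2.1, h.1, adj_symm h.2.2⟩
      rcases h2 with h2 | h2
      · exact Relation.ReflTransGen.mono (fun x y hxy => hsym hxy) _ _ (hkey q p hq hp (by omega) (by omega)).swap
      · exact hkey p q hp hq (by omega) (by omega)
  intro u hu v hv
  obtain ⟨pu, hpu, hequ⟩ := mem_KC.1 hu
  obtain ⟨pv, hpv, heqv⟩ := mem_KC.1 hv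
  rw [← hequ, ← heqv]
  have hlift : ∀ a b : ℤ × ℤ,
      Relation.ReflTransGen (fun a b => a ∈ S ∧ b ∈ S ∧ Adj a b) a b →
      Relation.ReflTransGen R ((phiC S a.1 : ℤ), a.2) ((phiC S b.1 : ℤ), b.2) := by
    intro a b h
    induction h with
    | refl => exact Relation.ReflTransGen.refl
    | tail hab hbc ih => exact ih.trans (hbase _ _ hbc.1 hbc.2.1 hbc.2.2)
  exact hlift _ _ (hc _ hpu _ hpv)

lemma KC_translate {S : Finset (ℤ × ℤ)} {v : ℤ × ℤ} (hS : S.Nonempty) :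
    KC (translateSh v S) = translateSh (0, v.2) (KC S) := by
  ext q
  rw [mem_KC, mem_translate, mem_KC]
  constructor
  · rintro ⟨p, hp, rfl⟩
    have hp' := mem_translate.1 hp
    refine ⟨(p.1 - v.1, p.2 - v.2), hp', ?_⟩
    rw [phiC_translate hS]
    show ((phiC S (p.1 - v.1) : ℤ), p.2 - v.2) =
      (((phiC S (p.1 - v.1) : ℤ), p.2).1 - 0, ((phiC S (p.1 - v.1) : ℤ), p.2).2 - v.2)
    simp
  · rintro ⟨p, hp, hh⟩
    refine ⟨(p.1 + v.1, p.2 + v.2), mem_translate.2 (by simpa using hp), ?_⟩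
    rw [phiC_translate hS]
    have e1 : p.1 + v.1 - v.1 = p.1 := by ring
    rw [show ((p.1 + v.1, p.2 + v.2).1 - v.1) = p.1 by show p.1 + v.1 - v.1 = p.1; ring]
    have h1 : (phiC S p.1 : ℤ) = q.1 - 0 := congrArg Prod.fst hh
    have h2 : p.2 = q.2 - v.2 := congrArg Prod.snd hh
    show ((phiC S p.1 : ℤ), p.2 + v.2) = q
    apply Prod.ext
    · show (phiC S p.1 : ℤ) = q.1; omega
    · show p.2 + v.2 = q.2; omega

lemma translate_zero {S : Finset (ℤ × ℤ)} : translateSh (0, 0) S = S := by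
  ext p
  rw [mem_translate]
  simp

lemma eq_translate_of_KR_eq {S T : Finset (ℤ × ℤ)} (hcS : ShapeConnected S)
    (hS : S.Nonempty) (hcT : ShapeConnected T) (hT : T.Nonempty)
    (hKR : KR S = KR T) (hMR : ∀ i, MR S i = MR T i) :
    T = translateSh (0, ymin T - ymin S) S := by
  have hKCtr : KC (tr S) = KC (tr T) := by rw [KC_tr, KC_tr, hKR]
  have hMCtr : ∀ i, MC (tr S) i = MC (tr T) i := fun i => by rw [MC_tr, MC_tr, hMR]
  have h := eq_translate_of_KC_eq (connected_tr hcS) (nonempty_tr hS)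
    (connected_tr hcT) (nonempty_tr hT) hKCtr hMCtr
  have h2 := congrArg tr h
  rw [tr_tr, translate_tr, tr_tr] at h2
  have e : (xmin (tr T) - xmin (tr S), (0:ℤ)).swap = ((0:ℤ), ymin T - ymin S) := by
    rw [Prod.swap_prod_mk, xmin_tr, xmin_tr]
  rw [e] at h2
  exact h2

/-! ### Final assembly -/

lemma translate_symm {S T : Finset (ℤ × ℤ)} {v : ℤ × ℤ} (h : T = translateSh v S) :
    S = translateSh (-v.1, -v.2) T := by
  subst h
  ext p
  rw [mem_translate, mem_translate]
  show p ∈ S ↔ (p.1 - -v.1 - v.1, p.2 - -v.2 - v.2) ∈ S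
  rw [show p.1 - -v.1 - v.1 = p.1 by ring, show p.2 - -v.2 - v.2 = p.2 by ring, Prod.mk.eta]

lemma eq_translate_of_inv {S T : Finset (ℤ × ℤ)} (hcS : ShapeConnected S) (hS : S.Nonempty)
    (hcT : ShapeConnected T) (hT : T.Nonempty)
    (hB : Baseline S = Baseline T) (hMC : ∀ i, MC S i = MC T i)
    (hMR : ∀ i, MR S i = MR T i) : ∃ v, T = translateSh v S := by
  have hrow := eq_translate_of_KR_eq (S := KC S) (T := KC T) (connected_KC hcS)
    (hS.image _) (connected_KC hcT) (hT.image _) hB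
    (fun i => by rw [MR_KC, MR_KC]; exact hMR i)
  set dy := ymin (KC T) - ymin (KC S) with hdy
  have hS' : KC (translateSh (0, dy) S) = KC T := by
    rw [KC_translate hS]
    show translateSh (0, dy) (KC S) = KC T
    exact hrow.symm
  have hMC' : ∀ i, MC (translateSh (0, dy) S) i = MC T i := fun i => by
    rw [MC_translate hS]; exact hMC i
  have hcol := eq_translate_of_KC_eq (connected_translate hcS) (nonempty_translate hS)
    hcT hT hS' hMC'
  rw [translate_translate] at hcol
  exact ⟨_, hcol⟩

lemma RCStep_inv {S T : Finset (ℤ × ℤ)} (hc : ShapeConnected S) (hS : S.Nonempty)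
    (hstep : RCStep S T) :
    ShapeConnected T ∧ T.Nonempty ∧ Baseline S = Baseline T ∧ mC S = mC T ∧ mR S = mR T ∧
      (∀ i, MC S i ≤ MC T i) ∧ (∀ i, MR S i ≤ MR T i) := by
  obtain ⟨D, hcase⟩ := hstep
  rcases hcase with ⟨⟨hDne, hAdm⟩, rfl⟩ | ⟨⟨hDne, hAdm⟩, rfl⟩
  · have hD : ∀ d ∈ D, d ∈ S.image Prod.fst := fun d hd => by
      obtain ⟨y, hy⟩ := hAdm d hd
      exact Finset.mem_image.2 ⟨(d, y), hy, rfl⟩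
    refine ⟨connected_RCE hc, nonempty_RCE hS, (Baseline_RCE hS hD).symm,
      (mC_RCE hS hD).symm, mR_RCE.symm, fun i => ?_, fun i => le_of_eq MR_RCE.symm⟩
    rw [MC_RCE hS hD]
    omega
  · have hD : ∀ d ∈ D, d ∈ (tr S).image Prod.fst := fun d hd => by
      obtain ⟨x, hx⟩ := hAdm d hd
      rw [image_fst_tr]
      exact Finset.mem_image.2 ⟨(x, d), hx, rfl⟩
    have htrS : (tr S).Nonempty := nonempty_tr hS
    refine ⟨?_, ?_, ?_, ?_, ?_, fun i => ?_, fun i => ?_⟩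
    · rw [RCN_eq_tr]
      exact connected_tr (connected_RCE (connected_tr hc))
    · rw [RCN_eq_tr]
      exact nonempty_tr (nonempty_RCE htrS)
    · rw [RCN_eq_tr, Baseline_tr, Baseline_RCE htrS hD, Baseline_tr, tr_tr]
    · rw [RCN_eq_tr, mC_tr, mR_RCE, mR_tr]
    · rw [RCN_eq_tr, mR_tr, mC_RCE htrS hD, mC_tr]
    · rw [RCN_eq_tr, MC_tr, MR_RCE, MR_tr]
    · rw [RCN_eq_tr, MR_tr, MC_RCE htrS hD, MC_tr]
      omega

noncomputable def nu (F S : Finset (ℤ × ℤ)) : ℕ :=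
  ∑ j ∈ Finset.range (mC F), (MC F j - MC S j) +
    ∑ j ∈ Finset.range (mR F), (MR F j - MR S j)

section Backward

variable {F : Finset (ℤ × ℤ)} (hcF : ShapeConnected F) (hF : F.Nonempty)

include hcF hF

lemma reach : ∀ n : ℕ, ∀ S : Finset (ℤ × ℤ), ShapeConnected S → S.Nonempty →
    Baseline S = Baseline F → mC S = mC F → mR S = mR F →
    (∀ i, MC S i ≤ MC F i) → (∀ i, MR S i ≤ MR F i) → nu F S ≤ n →
    ∃ v, Relation.ReflTransGen RCStep S (translateSh v F) := by
  intro n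
  induction n with
  | zero =>
      intro S hc hS hB hmc hmr hMC hMR hnu
      have hMCeq : ∀ i, MC S i = MC F i := by
        intro i
        by_contra hne
        have hlt : MC S i < MC F i := lt_of_le_of_ne (hMC i) hne
        have hiF : i < mC F := (lt_mC_iff hcF hF).2 (by omega)
        have h1 : 1 ≤ MC F i - MC S i := by omega
        have h2 : MC F i - MC S i ≤ ∑ j ∈ Finset.range (mC F), (MC F j - MC S j) :=
          Finset.single_le_sum (f := fun j => MC F j - MC S j)
            (fun j _ => Nat.zero_le _) (Finset.mem_range.2 hiF)
        unfold nu at hnu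
        omega
      have hMReq : ∀ i, MR S i = MR F i := by
        intro i
        by_contra hne
        have hlt : MR S i < MR F i := lt_of_le_of_ne (hMR i) hne
        have hiF : i < mR F := by
          by_contra hge
          have := MR_eq_zero_of_ge (S := F) (i := i) (by omega)
          omega
        have h1 : 1 ≤ MR F i - MR S i := by omega
        have h2 : MR F i - MR S i ≤ ∑ j ∈ Finset.range (mR F), (MR F j - MR S j) :=
          Finset.single_le_sum (f := fun j => MR F j - MR S j)
            (fun j _ => Nat.zero_le _) (Finset.mem_range.2 hiF)
        unfold nu at hnu
        omega
      obtain ⟨v, hv⟩ := eq_translate_of_inv hc hS hcF hF hB hMCeq hMReq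
      obtain ⟨w, hw⟩ : ∃ w, S = translateSh w F := ⟨_, translate_symm hv⟩
      exact ⟨w, by rw [← hw]⟩
  | succ n ih =>
      intro S hc hS hB hmc hmr hMC hMR hnu
      by_cases hex1 : ∃ i, MC S i < MC F i
      · obtain ⟨i, hi⟩ := hex1
        have hiF : i < mC F := (lt_mC_iff hcF hF).2 (by omega)
        have hiS : i < mC S := by omega
        obtain ⟨x, hx, hphix⟩ := exists_phiC_eq hc hS hiS
        have hD : ∀ d ∈ ({x} : Finset ℤ), d ∈ S.image Prod.fst := by
          intro d hd
          rw [Finset.mem_singleton] at hd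
          subst hd
          exact hx
        set T := RCE S {x} with hT
        have hstep : RCStep S T := by
          refine ⟨{x}, Or.inl ⟨⟨Finset.singleton_nonempty x, ?_⟩, rfl⟩⟩
          intro d hd
          obtain ⟨p, hp, hpd⟩ := Finset.mem_image.1 (hD d hd)
          exact ⟨p.2, by rw [← hpd]; rwa [Prod.mk.eta]⟩
        have hMCT : ∀ j, MC T j = MC S j + (if phiC S x = j then 1 else 0) := by
          intro j
          rw [hT, MC_RCE hS hD, Finset.filter_singleton]
          split_ifs <;> simp
        have hnuT : nu F T < nu F S := by
          unfold nu
          have hsum2 : ∑ j ∈ Finset.range (mR F), (MR F j - MR T j) =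
              ∑ j ∈ Finset.range (mR F), (MR F j - MR S j) := by
            apply Finset.sum_congr rfl
            intro j _
            rw [hT, MR_RCE]
          have hsum1 : ∑ j ∈ Finset.range (mC F), (MC F j - MC T j) <
              ∑ j ∈ Finset.range (mC F), (MC F j - MC S j) := by
            apply Finset.sum_lt_sum
            · intro j _
              have h5 := hMCT j
              have h6 := hMC j
              by_cases hj : phiC S x = j
              · rw [if_pos hj] at h5
                omega
              · rw [if_neg hj] at h5
                omega
            · refine ⟨i, Finset.mem_range.2 hiF, ?_⟩
              have := hMCT i
              rw [if_pos hphix] at this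
              omega
          omega
        have hcT : ShapeConnected T := connected_RCE hc
        have hST : T.Nonempty := nonempty_RCE hS
        obtain ⟨v, hv⟩ := ih T hcT hST
          (by rw [hT, Baseline_RCE hS hD]; exact hB)
          (by rw [hT, mC_RCE hS hD]; exact hmc)
          (by rw [hT, mR_RCE]; exact hmr)
          (by
            intro j
            have h5 := hMCT j
            by_cases hj : phiC S x = j
            · rw [if_pos hj] at h5
              have hji : j = i := by rw [← hj, hphix]
              subst hji
              omega
            · rw [if_neg hj] at h5
              have := hMC j
              omega)
          (fun j => by rw [hT, MR_RCE]; exact hMR j)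
          (by omega)
        exact ⟨v, hv.head hstep⟩
      · by_cases hex2 : ∃ i, MR S i < MR F i
        · obtain ⟨i, hi⟩ := hex2
          have hiF : i < mR F := by
            by_contra hge
            have := MR_eq_zero_of_ge (S := F) (i := i) (by omega)
            omega
          have hiS : i < mC (tr S) := by rw [mC_tr]; omega
          obtain ⟨x, hx, hphix⟩ := exists_phiC_eq (connected_tr hc) (nonempty_tr hS) hiS
          rw [phiC_tr] at hphix
          have hD : ∀ d ∈ ({x} : Finset ℤ), d ∈ (tr S).image Prod.fst := by
            intro d hd
            rw [Finset.mem_singleton] at hd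
            subst hd
            exact hx
          have htrS : (tr S).Nonempty := nonempty_tr hS
          set T := RCN S {x} with hT
          have hTtr : T = tr (RCE (tr S) {x}) := RCN_eq_tr
          have hstep : RCStep S T := by
            refine ⟨{x}, Or.inr ⟨⟨Finset.singleton_nonempty x, ?_⟩, rfl⟩⟩
            intro d hd
            rw [image_fst_tr] at hD
            obtain ⟨p, hp, hpd⟩ := Finset.mem_image.1 (hD d hd)
            exact ⟨p.1, by rw [← hpd]; rwa [Prod.mk.eta]⟩
          have hMRT : ∀ j, MR T j = MR S j + (if phiR S x = j then 1 else 0) := by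
            intro j
            rw [hTtr, MR_tr, MC_RCE htrS hD, Finset.filter_singleton, MC_tr, phiC_tr]
            split_ifs <;> simp
          have hMCT : ∀ j, MC T j = MC S j := by
            intro j
            rw [hTtr, MC_tr, MR_RCE, MR_tr]
          have hnuT : nu F T < nu F S := by
            unfold nu
            have hsum1 : ∑ j ∈ Finset.range (mC F), (MC F j - MC T j) =
                ∑ j ∈ Finset.range (mC F), (MC F j - MC S j) := by
              apply Finset.sum_congr rfl
              intro j _
              rw [hMCT j]
            have hsum2 : ∑ j ∈ Finset.range (mR F), (MR F j - MR T j) <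
                ∑ j ∈ Finset.range (mR F), (MR F j - MR S j) := by
              apply Finset.sum_lt_sum
              · intro j _
                have h5 := hMRT j
                have h6 := hMR j
                by_cases hj : phiR S x = j
                · rw [if_pos hj] at h5
                  omega
                · rw [if_neg hj] at h5
                  omega
              · refine ⟨i, Finset.mem_range.2 hiF, ?_⟩
                have := hMRT i
                rw [if_pos hphix] at this
                omega
            omega
          have hcT : ShapeConnected T := by
            rw [hTtr]
            exact connected_tr (connected_RCE (connected_tr hc))
          have hST : T.Nonempty := by
            rw [hTtr]
            exact nonempty_tr (nonempty_RCE htrS)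
          obtain ⟨v, hv⟩ := ih T hcT hST
            (by rw [hTtr, Baseline_tr, Baseline_RCE htrS hD, Baseline_tr, tr_tr]; exact hB)
            (by rw [hTtr, mC_tr, mR_RCE, mR_tr]; exact hmc)
            (by rw [hTtr, mR_tr, mC_RCE htrS hD, mC_tr]; exact hmr)
            (fun j => by rw [hMCT j]; exact hMC j)
            (by
              intro j
              have h5 := hMRT j
              by_cases hj : phiR S x = j
              · rw [if_pos hj] at h5
                have hji : j = i := by rw [← hj, hphix]
                subst hji
                omega
              · rw [if_neg hj] at h5
                have := hMR j
                omega)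
            (by omega)
          exact ⟨v, hv.head hstep⟩
        · push_neg at hex1 hex2
          have hMCeq : ∀ i, MC S i = MC F i := fun i => le_antisymm (hMC i) (hex1 i)
          have hMReq : ∀ i, MR S i = MR F i := fun i => le_antisymm (hMR i) (hex2 i)
          obtain ⟨v, hv⟩ := eq_translate_of_inv hc hS hcF hF hB hMCeq hMReq
          obtain ⟨w, hw⟩ : ∃ w, S = translateSh w F := ⟨_, translate_symm hv⟩
          exact ⟨w, by rw [← hw]⟩

end Backward

end RCAux

/-- characterization of reachability under RC doubling via baselines and
column/row multiplicities. -/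
theorem RC_reachability_characterization (S_I S_F : Finset (ℤ × ℤ))
    (hI : S_I.Nonempty) (hF : S_F.Nonempty)
    (hcI : ShapeConnected S_I) (hcF : ShapeConnected S_F) :
    (∃ v : ℤ × ℤ, Relation.ReflTransGen RCStep S_I (translateSh v S_F)) ↔
      (Baseline S_I = Baseline S_F ∧
        mC S_I = mC S_F ∧ mR S_I = mR S_F ∧
        (∀ i < mC S_I, MC S_I i ≤ MC S_F i) ∧
        (∀ i < mR S_I, MR S_I i ≤ MR S_F i)) := by
  constructor
  · rintro ⟨v, hpath⟩
    have main : ∀ Y, Relation.ReflTransGen RCStep S_I Y →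
        ShapeConnected Y ∧ Y.Nonempty ∧ Baseline S_I = Baseline Y ∧ mC S_I = mC Y ∧
          mR S_I = mR Y ∧ (∀ i, MC S_I i ≤ MC Y i) ∧ (∀ i, MR S_I i ≤ MR Y i) := by
      intro Y h
      induction h with
      | refl => exact ⟨hcI, hI, rfl, rfl, rfl, fun i => le_rfl, fun i => le_rfl⟩
      | tail hab hbc ih =>
          obtain ⟨hc1, hn1, hB1, hmc1, hmr1, hMC1, hMR1⟩ := ih
          obtain ⟨hc2, hn2, hB2, hmc2, hmr2, hMC2, hMR2⟩ := RCAux.RCStep_inv hc1 hn1 hbc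
          exact ⟨hc2, hn2, hB1.trans hB2, hmc1.trans hmc2, hmr1.trans hmr2,
            fun i => (hMC1 i).trans (hMC2 i), fun i => (hMR1 i).trans (hMR2 i)⟩
    obtain ⟨_, _, hB, hmc, hmr, hMC, hMR⟩ := main _ hpath
    rw [RCAux.Baseline_translate hF] at hB
    rw [RCAux.mC_translate hF] at hmc
    rw [RCAux.mR_translate hF] at hmr
    refine ⟨hB, hmc, hmr, fun i _ => ?_, fun i _ => ?_⟩
    · have := hMC i
      rwa [RCAux.MC_translate hF] at this
    · have := hMR i
      rwa [RCAux.MR_translate hF] at this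
  · rintro ⟨hB, hmc, hmr, hMC, hMR⟩
    have hMC' : ∀ i, MC S_I i ≤ MC S_F i := by
      intro i
      by_cases hi : i < mC S_I
      · exact hMC i hi
      · rw [RCAux.MC_eq_zero_of_ge (S := S_I) (by omega)]
        exact Nat.zero_le _
    have hMR' : ∀ i, MR S_I i ≤ MR S_F i := by
      intro i
      by_cases hi : i < mR S_I
      · exact hMR i hi
      · rw [RCAux.MR_eq_zero_of_ge (S := S_I) (by omega)]
        exact Nat.zero_le _
    exact RCAux.reach hcF hF (RCAux.nu S_F S_I) S_I hcI hI hB hmc hmr hMC' hMR' le_rfl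
end

section
/- (Uniqueness of the baseline shape) For every connected shape S, compressing columns first and then rows yields the same shape as compressing rows first and then columns: K_R(K_C(S)) = K_C(K_R(S)). In particular, the baseline B(S) does not depend on the order in which consecutive duplicate columns and rows are removed. -/
section BaselineAux

open Finset

lemma mem_rowS {S : Finset (ℤ × ℤ)} {x y : ℤ} : x ∈ rowS S y ↔ (x, y) ∈ S := by
  simp [rowS]

lemma mem_colS {S : Finset (ℤ × ℤ)} {x y : ℤ} : y ∈ colS S x ↔ (x, y) ∈ S := by
  simp [colS]

lemma ymin_le_of_mem {S : Finset (ℤ × ℤ)} {x y : ℤ} (h : (x, y) ∈ S) : ymin S ≤ y := by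
  have hy : y ∈ S.image Prod.snd := Finset.mem_image_of_mem _ h
  obtain ⟨b, hb⟩ := Finset.min_of_mem hy
  have h2 := Finset.min_le hy
  rw [hb] at h2
  rw [ymin, hb]
  exact_mod_cast h2

lemma xmin_le_of_mem {S : Finset (ℤ × ℤ)} {x y : ℤ} (h : (x, y) ∈ S) : xmin S ≤ x := by
  have hy : x ∈ S.image Prod.fst := Finset.mem_image_of_mem _ h
  obtain ⟨b, hb⟩ := Finset.min_of_mem hy
  have h2 := Finset.min_le hy
  rw [hb] at h2
  rw [xmin, hb]
  exact_mod_cast h2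

lemma rows_eq_of_phiR_eq_aux {S : Finset (ℤ × ℤ)} {y y' : ℤ} (hmin : ymin S ≤ y)
    (hle : y ≤ y') (h : phiR S y = phiR S y') : rowS S y = rowS S y' := by
  have hsub : ((Finset.Icc (ymin S + 1) y).filter fun y0 => rowS S y0 ≠ rowS S (y0 - 1)) ⊆
      ((Finset.Icc (ymin S + 1) y').filter fun y0 => rowS S y0 ≠ rowS S (y0 - 1)) :=
    Finset.filter_subset_filter _ (Finset.Icc_subset_Icc_right hle)
  have heq := Finset.eq_of_subset_of_card_le hsub (le_of_eq h.symm)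
  have hstep : ∀ z, y < z → z ≤ y' → rowS S z = rowS S (z - 1) := by
    intro z h1 h2
    by_contra hne
    have hmem : z ∈ (Finset.Icc (ymin S + 1) y').filter
        fun y0 => rowS S y0 ≠ rowS S (y0 - 1) :=
      Finset.mem_filter.2 ⟨Finset.mem_Icc.2 ⟨by omega, h2⟩, hne⟩
    rw [← heq] at hmem
    have := (Finset.mem_Icc.1 (Finset.mem_filter.1 hmem).1).2
    omega
  have hall : ∀ z, y ≤ z → z ≤ y' → rowS S z = rowS S y := by
    intro z
    refine Int.le_induction (motive := fun z _ => z ≤ y' → rowS S z = rowS S y) ?_ ?_ z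
    · intro _; rfl
    · intro n hn ih h2
      have hs := hstep (n + 1) (by omega) h2
      rw [hs, show n + 1 - 1 = n by ring]
      exact ih (by omega)
  exact (hall y' hle le_rfl).symm

lemma rows_eq_of_phiR_eq {S : Finset (ℤ × ℤ)} {y y' : ℤ} (hy : ymin S ≤ y)
    (hy' : ymin S ≤ y') (h : phiR S y = phiR S y') : rowS S y = rowS S y' := by
  rcases le_total y y' with hle | hle
  · exact rows_eq_of_phiR_eq_aux hy hle h
  · exact (rows_eq_of_phiR_eq_aux hy' hle h.symm).symm

lemma cols_eq_of_phiC_eq_aux {S : Finset (ℤ × ℤ)} {x x' : ℤ} (hmin : xmin S ≤ x)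
    (hle : x ≤ x') (h : phiC S x = phiC S x') : colS S x = colS S x' := by
  have hsub : ((Finset.Icc (xmin S + 1) x).filter fun x0 => colS S x0 ≠ colS S (x0 - 1)) ⊆
      ((Finset.Icc (xmin S + 1) x').filter fun x0 => colS S x0 ≠ colS S (x0 - 1)) :=
    Finset.filter_subset_filter _ (Finset.Icc_subset_Icc_right hle)
  have heq := Finset.eq_of_subset_of_card_le hsub (le_of_eq h.symm)
  have hstep : ∀ z, x < z → z ≤ x' → colS S z = colS S (z - 1) := by
    intro z h1 h2
    by_contra hne
    have hmem : z ∈ (Finset.Icc (xmin S + 1) x').filter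
        fun x0 => colS S x0 ≠ colS S (x0 - 1) :=
      Finset.mem_filter.2 ⟨Finset.mem_Icc.2 ⟨by omega, h2⟩, hne⟩
    rw [← heq] at hmem
    have := (Finset.mem_Icc.1 (Finset.mem_filter.1 hmem).1).2
    omega
  have hall : ∀ z, x ≤ z → z ≤ x' → colS S z = colS S x := by
    intro z
    refine Int.le_induction (motive := fun z _ => z ≤ x' → colS S z = colS S x) ?_ ?_ z
    · intro _; rfl
    · intro n hn ih h2
      have hs := hstep (n + 1) (by omega) h2
      rw [hs, show n + 1 - 1 = n by ring]
      exact ih (by omega)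
  exact (hall x' hle le_rfl).symm

lemma cols_eq_of_phiC_eq {S : Finset (ℤ × ℤ)} {x x' : ℤ} (hx : xmin S ≤ x)
    (hx' : xmin S ≤ x') (h : phiC S x = phiC S x') : colS S x = colS S x' := by
  rcases le_total x x' with hle | hle
  · exact cols_eq_of_phiC_eq_aux hx hle h
  · exact (cols_eq_of_phiC_eq_aux hx' hle h.symm).symm

lemma rowS_KC (S : Finset (ℤ × ℤ)) (y : ℤ) :
    rowS (KC S) y = (rowS S y).image fun x => ((phiC S x : ℤ)) := by
  ext a
  simp only [rowS, KC, Finset.mem_image, Finset.mem_filter]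
  constructor
  · rintro ⟨p, ⟨⟨q, hq, rfl⟩, hpy⟩, rfl⟩
    exact ⟨q.1, ⟨q, ⟨hq, hpy⟩, rfl⟩, rfl⟩
  · rintro ⟨x, ⟨q, ⟨hq, hqy⟩, rfl⟩, rfl⟩
    exact ⟨((phiC S q.1 : ℤ), q.2), ⟨⟨q, hq, rfl⟩, hqy⟩, rfl⟩

lemma colS_KR (S : Finset (ℤ × ℤ)) (x : ℤ) :
    colS (KR S) x = (colS S x).image fun y => ((phiR S y : ℤ)) := by
  ext a
  simp only [colS, KR, Finset.mem_image, Finset.mem_filter]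
  constructor
  · rintro ⟨p, ⟨⟨q, hq, rfl⟩, hpx⟩, rfl⟩
    exact ⟨q.2, ⟨q, ⟨hq, hpx⟩, rfl⟩, rfl⟩
  · rintro ⟨y, ⟨q, ⟨hq, hqx⟩, rfl⟩, rfl⟩
    exact ⟨(q.1, (phiR S q.2 : ℤ)), ⟨⟨q, hq, rfl⟩, hqx⟩, rfl⟩

lemma rowKC_subset {S : Finset (ℤ × ℤ)} {y y' : ℤ}
    (h : rowS (KC S) y = rowS (KC S) y') : rowS S y ⊆ rowS S y' := by
  intro x hx
  rw [rowS_KC, rowS_KC] at h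
  have hmem : (phiC S x : ℤ) ∈ (rowS S y').image fun x => ((phiC S x : ℤ)) := by
    rw [← h]; exact Finset.mem_image_of_mem _ hx
  obtain ⟨x'', hx'', hph⟩ := Finset.mem_image.1 hmem
  have hph' : phiC S x'' = phiC S x := by exact_mod_cast hph
  have h1 : (x, y) ∈ S := mem_rowS.1 hx
  have h2 : (x'', y') ∈ S := mem_rowS.1 hx''
  have hcols : colS S x'' = colS S x :=
    cols_eq_of_phiC_eq (xmin_le_of_mem h2) (xmin_le_of_mem h1) hph'
  have : y' ∈ colS S x'' := mem_colS.2 h2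
  rw [hcols] at this
  exact mem_rowS.2 (mem_colS.1 this)

lemma rowKC_eq_iff {S : Finset (ℤ × ℤ)} {y y' : ℤ} :
    rowS (KC S) y = rowS (KC S) y' ↔ rowS S y = rowS S y' := by
  constructor
  · intro h
    exact Finset.Subset.antisymm (rowKC_subset h) (rowKC_subset h.symm)
  · intro h
    rw [rowS_KC, rowS_KC, h]

lemma colKR_subset {S : Finset (ℤ × ℤ)} {x x' : ℤ}
    (h : colS (KR S) x = colS (KR S) x') : colS S x ⊆ colS S x' := by
  intro y hy
  rw [colS_KR, colS_KR] at h
  have hmem : (phiR S y : ℤ) ∈ (colS S x').image fun y => ((phiR S y : ℤ)) := by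
    rw [← h]; exact Finset.mem_image_of_mem _ hy
  obtain ⟨y'', hy'', hph⟩ := Finset.mem_image.1 hmem
  have hph' : phiR S y'' = phiR S y := by exact_mod_cast hph
  have h1 : (x, y) ∈ S := mem_colS.1 hy
  have h2 : (x', y'') ∈ S := mem_colS.1 hy''
  have hrows : rowS S y'' = rowS S y :=
    rows_eq_of_phiR_eq (ymin_le_of_mem h2) (ymin_le_of_mem h1) hph'
  have : x' ∈ rowS S y'' := mem_rowS.2 h2
  rw [hrows] at this
  exact mem_colS.2 (mem_rowS.1 this)

lemma colKR_eq_iff {S : Finset (ℤ × ℤ)} {x x' : ℤ} :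
    colS (KR S) x = colS (KR S) x' ↔ colS S x = colS S x' := by
  constructor
  · intro h
    exact Finset.Subset.antisymm (colKR_subset h) (colKR_subset h.symm)
  · intro h
    rw [colS_KR, colS_KR, h]

lemma ymin_KC (S : Finset (ℤ × ℤ)) : ymin (KC S) = ymin S := by
  unfold ymin
  congr 1
  congr 1
  rw [KC, Finset.image_image]
  rfl

lemma xmin_KR (S : Finset (ℤ × ℤ)) : xmin (KR S) = xmin S := by
  unfold xmin
  congr 1
  congr 1
  rw [KR, Finset.image_image]
  rfl

lemma phiR_KC (S : Finset (ℤ × ℤ)) (y : ℤ) : phiR (KC S) y = phiR S y := by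
  unfold phiR
  rw [ymin_KC]
  congr 1
  apply Finset.filter_congr
  intro z _
  simp only [ne_eq, eq_iff_iff]
  constructor
  · intro h hc; exact h (rowKC_eq_iff.2 hc)
  · intro h hc; exact h (rowKC_eq_iff.1 hc)

lemma phiC_KR (S : Finset (ℤ × ℤ)) (x : ℤ) : phiC (KR S) x = phiC S x := by
  unfold phiC
  rw [xmin_KR]
  congr 1
  apply Finset.filter_congr
  intro z _
  simp only [ne_eq, eq_iff_iff]
  constructor
  · intro h hc; exact h (colKR_eq_iff.2 hc)
  · intro h hc; exact h (colKR_eq_iff.1 hc)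

end BaselineAux

/-- uniqueness of the baseline shape: compressing columns first and
then rows yields the same shape as compressing rows first and then columns. -/
theorem baseline_unique (S : Finset (ℤ × ℤ)) (hS : S.Nonempty)
    (hconn : ShapeConnected S) :
    KR (KC S) = KC (KR S) := by
  have h1 : KR (KC S) = S.image fun p => (((phiC S p.1 : ℤ)), ((phiR S p.2 : ℤ))) := by
    rw [KR, show (fun p : ℤ × ℤ => (p.1, (phiR (KC S) p.2 : ℤ))) =
        fun p : ℤ × ℤ => (p.1, (phiR S p.2 : ℤ)) from funext fun p => by rw [phiR_KC],
      KC, Finset.image_image]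
    rfl
  have h2 : KC (KR S) = S.image fun p => (((phiC S p.1 : ℤ)), ((phiR S p.2 : ℤ))) := by
    rw [KC, show (fun p : ℤ × ℤ => ((phiC (KR S) p.1 : ℤ), p.2)) =
        fun p : ℤ × ℤ => ((phiC S p.1 : ℤ), p.2) from funext fun p => by rw [phiC_KR],
      KR, Finset.image_image]
    rfl
  rw [h1, h2]
end
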